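/- arXiv:1211.5933 — 5 statements merged into one kernel-verified Lean document; each statement's English description precedes it below -/
import Mathlib

section
/- Let G be a finite prereduced graph, let P = (v₀, v₁, …, v_p) be a chordless (induced) path in G of length p, and let u be a vertex adjacent to every inner vertex v₁, …, v_{p−1} of P. Then: (1) if p ≥ 4 and u is also adjacent to v₀ and v_p, then N[v_ℓ] ⊆ N[u] for every 2 ≤ ℓ ≤ p−2; (2) if p ≥ 3 and u is also adjacent to v₀ and v_p, then N[v_ℓ] ∩ N[v_{ℓ+1}] ⊆ N[u] for every 1 ≤ ℓ ≤ p−2; (3) if p ≥ 4, then N[v_ℓ] \ (N(v₁) ∪ N(v_{p−1})) ⊆ N[u] for every 2 ≤ ℓ ≤ p−2. -/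
/-- A graph is an interval graph if each vertex can be assigned a (nonempty) closed real
interval such that two distinct vertices are adjacent iff their intervals intersect. -/
def IsIntervalGraph {V : Type*} (G : SimpleGraph V) : Prop :=
  ∃ f : V → Set ℝ,
    (∀ v, ∃ a b : ℝ, a ≤ b ∧ f v = Set.Icc a b) ∧
    ∀ u v : V, u ≠ v → (G.Adj u v ↔ (f u ∩ f v).Nonempty)

/-- A hole is an induced (chordless) cycle on at least 4 vertices, identified
with its vertex set. -/
def IsHole {V : Type*} (G : SimpleGraph V) (H : Set V) : Prop :=
  ∃ m : ℕ, 4 ≤ m ∧ ∃ f : ZMod m → V,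
    Function.Injective f ∧ Set.range f = H ∧
      ∀ i j : ZMod m, G.Adj (f i) (f j) ↔ (j = i + 1 ∨ i = j + 1)

/-- A minimal forbidden set: the induced subgraph is not interval, but every
proper subset induces an interval graph. -/
def IsMinimalForbidden {V : Type*} (G : SimpleGraph V) (X : Set V) : Prop :=
  ¬ IsIntervalGraph (G.induce X) ∧ ∀ Y : Set V, Y ⊂ X → IsIntervalGraph (G.induce Y)

/-- A graph is prereduced if it has no minimal forbidden set of at most 10 vertices. -/
def Prereduced {V : Type*} (G : SimpleGraph V) : Prop :=
  ∀ X : Set V, X.ncard ≤ 10 → ¬ IsMinimalForbidden G X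

/-- A module: any two vertices of `M` have exactly the same neighbors outside `M`. -/
def IsGraphModule {V : Type*} (G : SimpleGraph V) (M : Set V) : Prop :=
  ∀ u ∈ M, ∀ v ∈ M, ∀ x ∉ M, (G.Adj u x ↔ G.Adj v x)

/-- A graph is reduced if it is prereduced and every nontrivial module induces a clique. -/
def Reduced {V : Type*} [Fintype V] (G : SimpleGraph V) : Prop :=
  Prereduced G ∧
    ∀ M : Set V, IsGraphModule G M → 1 < M.ncard → M.ncard < Fintype.card V →
      G.IsClique M

/-- Closed neighborhood `N[v]`. -/
def closedNbhd {V : Type*} (G : SimpleGraph V) (v : V) : Set V :=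
  insert v (G.neighborSet v)

/-- Closed neighborhood of a set, `N[U] = ⋃ v ∈ U, N[v]`. -/
def closedNbhdSet {V : Type*} (G : SimpleGraph V) (U : Set V) : Set V :=
  ⋃ v ∈ U, closedNbhd G v

/-- The set of common neighbors of a vertex set `X`. -/
def commonNbrs {V : Type*} (G : SimpleGraph V) (X : Set V) : Set V :=
  {v | ∀ x ∈ X, G.Adj v x}

/-- `P` induces a chordless path: it can be enumerated so that adjacency holds
exactly between consecutive vertices. -/
def IsInducedPath {V : Type*} (G : SimpleGraph V) (P : Set V) : Prop :=
  ∃ n : ℕ, ∃ f : Fin (n + 1) → V, Function.Injective f ∧ Set.range f = P ∧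
    ∀ i j : Fin (n + 1), G.Adj (f i) (f j) ↔ (i.val + 1 = j.val ∨ j.val + 1 = i.val)

/-- A shallow terminal: a vertex `s` contained in a minimal forbidden set `W` that is
not a hole, such that `W \ N[s]` induces a chordless path. -/
def ShallowTerminal {V : Type*} (G : SimpleGraph V) (s : V) : Prop :=
  ∃ W : Set V, IsMinimalForbidden G W ∧ s ∈ W ∧ ¬ IsHole G W ∧
    IsInducedPath G (W \ closedNbhd G s)

/-- A hole cover: a vertex set intersecting every hole. -/
def HoleCover {V : Type*} (G : SimpleGraph V) (C : Set V) : Prop :=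
  ∀ H : Set V, IsHole G H → (C ∩ H).Nonempty

/-- A minimal hole cover: a hole cover no proper subset of which is a hole cover. -/
def MinimalHoleCover {V : Type*} (G : SimpleGraph V) (C : Set V) : Prop :=
  HoleCover G C ∧ ∀ C' : Set V, C' ⊂ C → ¬ HoleCover G C'

/-- An interval deletion set: a vertex set whose removal leaves an interval graph. -/
def IntervalDeletionSet {V : Type*} (G : SimpleGraph V) (Q : Set V) : Prop :=
  IsIntervalGraph (G.induce Qᶜ)

/-- A minimum interval deletion set. -/
def MinIntervalDeletionSet {V : Type*} (G : SimpleGraph V) (Q : Set V) : Prop :=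
  IntervalDeletionSet G Q ∧
    ∀ Q' : Set V, IntervalDeletionSet G Q' → Q.ncard ≤ Q'.ncard

/-- Two holes are congenial if each is contained in the closed neighborhood of the other. -/
def Congenial {V : Type*} (G : SimpleGraph V) (H₁ H₂ : Set V) : Prop :=
  H₁ ⊆ closedNbhdSet G H₂ ∧ H₂ ⊆ closedNbhdSet G H₁

/-- The graph `G − S`: edges of `G` with both endpoints outside `S`
(vertices of `S` become isolated). -/
def deleteSet {V : Type*} (G : SimpleGraph V) (S : Set V) : SimpleGraph V where
  Adj u v := G.Adj u v ∧ u ∉ S ∧ v ∉ S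
  symm := ⟨fun u v h => ⟨h.1.symm, h.2.2, h.2.1⟩⟩
  loopless := ⟨fun v h => G.loopless.irrefl v h.1⟩

section InternalAux
open Set

private lemma icc_disj {a1 a2 b1 b2 : ℝ} (ha : a1 ≤ a2) (hb : b1 ≤ b2)
    (h : Set.Icc a1 a2 ∩ Set.Icc b1 b2 = ∅) : a2 < b1 ∨ b2 < a1 := by
  by_contra hc
  push_neg at hc
  have hm : max a1 b1 ∈ Set.Icc a1 a2 ∩ Set.Icc b1 b2 :=
    ⟨⟨le_max_left _ _, max_le ha hc.1⟩, ⟨le_max_right _ _, max_le hc.2 hb⟩⟩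
  rw [h] at hm
  exact hm

private lemma realC4 {a1 a2 b1 b2 c1 c2 d1 d2 : ℝ}
    (ha : a1 ≤ a2) (hb : b1 ≤ b2) (hc : c1 ≤ c2) (hd : d1 ≤ d2)
    (hAB : (Icc a1 a2 ∩ Icc b1 b2).Nonempty)
    (hBC : (Icc b1 b2 ∩ Icc c1 c2).Nonempty)
    (hCD : (Icc c1 c2 ∩ Icc d1 d2).Nonempty)
    (hDA : (Icc d1 d2 ∩ Icc a1 a2).Nonempty)
    (hAC : Icc a1 a2 ∩ Icc c1 c2 = ∅)
    (hBD : Icc b1 b2 ∩ Icc d1 d2 = ∅) : False := by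
  obtain ⟨s, ⟨hs1, hs2⟩, hs3, hs4⟩ := hAB
  obtain ⟨t, ⟨ht1, ht2⟩, ht3, ht4⟩ := hBC
  obtain ⟨q, ⟨hq1, hq2⟩, hq3, hq4⟩ := hCD
  obtain ⟨r, ⟨hr1, hr2⟩, hr3, hr4⟩ := hDA
  rcases icc_disj ha hc hAC with h1 | h1 <;> rcases icc_disj hb hd hBD with h2 | h2 <;> linarith

private lemma realL2 {u1 u2 x1 x2 p1 p2 q1 q2 r1 r2 s1 s2 : ℝ}
    (hu : u1 ≤ u2) (hx : x1 ≤ x2) (hp : p1 ≤ p2) (hq : q1 ≤ q2) (hr : r1 ≤ r2) (hs : s1 ≤ s2)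
    (hUA : (Icc u1 u2 ∩ Icc p1 p2).Nonempty)
    (hUD : (Icc u1 u2 ∩ Icc s1 s2).Nonempty)
    (hJB : (Icc x1 x2 ∩ Icc q1 q2).Nonempty)
    (hJC : (Icc x1 x2 ∩ Icc r1 r2).Nonempty)
    (hAB : (Icc p1 p2 ∩ Icc q1 q2).Nonempty)
    (hCD : (Icc r1 r2 ∩ Icc s1 s2).Nonempty)
    (hAD : Icc p1 p2 ∩ Icc s1 s2 = ∅)
    (hAC : Icc p1 p2 ∩ Icc r1 r2 = ∅)
    (hBD : Icc q1 q2 ∩ Icc s1 s2 = ∅)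
    (hJU : Icc x1 x2 ∩ Icc u1 u2 = ∅) : False := by
  obtain ⟨a, ⟨ha1, ha2⟩, ha3, ha4⟩ := hUA
  obtain ⟨b, ⟨hb1, hb2⟩, hb3, hb4⟩ := hUD
  obtain ⟨c, ⟨hc1, hc2⟩, hc3, hc4⟩ := hJB
  obtain ⟨d, ⟨hd1, hd2⟩, hd3, hd4⟩ := hJC
  obtain ⟨e, ⟨he1, he2⟩, he3, he4⟩ := hAB
  obtain ⟨g, ⟨hg1, hg2⟩, hg3, hg4⟩ := hCD
  rcases icc_disj hp hs hAD with h1 | h1 <;>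
    rcases icc_disj hp hr hAC with h2 | h2 <;>
      rcases icc_disj hq hs hBD with h3 | h3 <;>
        rcases icc_disj hx hu hJU with h4 | h4 <;> linarith

private lemma realL3b {u1 u2 x1 x2 a1 a2 b1 b2 c1 c2 d1 d2 e1 e2 : ℝ}
    (hu : u1 ≤ u2) (hx : x1 ≤ x2) (hA : a1 ≤ a2) (hB : b1 ≤ b2) (hC : c1 ≤ c2)
    (hD : d1 ≤ d2) (hE : e1 ≤ e2)
    (hab : (Icc a1 a2 ∩ Icc b1 b2).Nonempty)
    (hbc : (Icc b1 b2 ∩ Icc c1 c2).Nonempty)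
    (hcd : (Icc c1 c2 ∩ Icc d1 d2).Nonempty)
    (hde : (Icc d1 d2 ∩ Icc e1 e2).Nonempty)
    (hub : (Icc u1 u2 ∩ Icc b1 b2).Nonempty)
    (hud : (Icc u1 u2 ∩ Icc d1 d2).Nonempty)
    (hxc : (Icc x1 x2 ∩ Icc c1 c2).Nonempty)
    (hbd : Icc b1 b2 ∩ Icc d1 d2 = ∅)
    (hac : Icc a1 a2 ∩ Icc c1 c2 = ∅)
    (hce : Icc c1 c2 ∩ Icc e1 e2 = ∅)
    (hxu : Icc x1 x2 ∩ Icc u1 u2 = ∅)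
    (hxb : Icc x1 x2 ∩ Icc b1 b2 = ∅)
    (hxd : Icc x1 x2 ∩ Icc d1 d2 = ∅) : False := by
  obtain ⟨p, ⟨hp1, hp2⟩, hp3, hp4⟩ := hab
  obtain ⟨q, ⟨hq1, hq2⟩, hq3, hq4⟩ := hbc
  obtain ⟨r, ⟨hr1, hr2⟩, hr3, hr4⟩ := hcd
  obtain ⟨s, ⟨hs1, hs2⟩, hs3, hs4⟩ := hde
  obtain ⟨m, ⟨hm1, hm2⟩, hm3, hm4⟩ := hub
  obtain ⟨n, ⟨hn1, hn2⟩, hn3, hn4⟩ := hud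
  obtain ⟨w, ⟨hw1, hw2⟩, hw3, hw4⟩ := hxc
  rcases icc_disj hB hD hbd with h1 | h1 <;>
    rcases icc_disj hA hC hac with h2 | h2 <;>
      rcases icc_disj hC hE hce with h3 | h3 <;>
        rcases icc_disj hx hu hxu with h4 | h4 <;>
          rcases icc_disj hx hB hxb with h5 | h5 <;>
            rcases icc_disj hx hD hxd with h6 | h6 <;> linarith

private lemma pr_ncard7 {V : Type*} (a b c d e f g : V) :
    ({a, b, c, d, e, f, g} : Set V).ncard ≤ 10 := by
  have h1 := Set.ncard_insert_le a ({b, c, d, e, f, g} : Set V)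
  have h2 := Set.ncard_insert_le b ({c, d, e, f, g} : Set V)
  have h3 := Set.ncard_insert_le c ({d, e, f, g} : Set V)
  have h4 := Set.ncard_insert_le d ({e, f, g} : Set V)
  have h5 := Set.ncard_insert_le e ({f, g} : Set V)
  have h6 := Set.ncard_insert_le f ({g} : Set V)
  have h7 : ({g} : Set V).ncard = 1 := Set.ncard_singleton g
  omega

private lemma pr_small {V : Type*} [Fintype V] (G : SimpleGraph V) (hG : Prereduced G)
    (X : Set V) (hX : X.ncard ≤ 10) : IsIntervalGraph (G.induce X) := by
  by_contra hne
  set S : Set (Set V) := {Y | Y ⊆ X ∧ ¬ IsIntervalGraph (G.induce Y)} with hS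
  have hXS : X ∈ S := ⟨subset_rfl, hne⟩
  have hT : (Set.ncard '' S).Nonempty := ⟨_, X, hXS, rfl⟩
  obtain ⟨Y, hYS, hYeq⟩ := Nat.sInf_mem hT
  refine hG Y ?_ ⟨hYS.2, ?_⟩
  · exact le_trans (Set.ncard_le_ncard hYS.1 (Set.toFinite X)) hX
  · intro Z hZ
    by_contra hZne
    have hZS : Z ∈ S := ⟨hZ.subset.trans hYS.1, hZne⟩
    have h1 : sInf (Set.ncard '' S) ≤ Z.ncard := Nat.sInf_le ⟨Z, hZS, rfl⟩
    have h2 : Z.ncard < Y.ncard := Set.ncard_lt_ncard hZ (Set.toFinite Y)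
    omega

private lemma pr_rep {V : Type*} [Fintype V] (G : SimpleGraph V) (hG : Prereduced G)
    (X : Set V) (hX : X.ncard ≤ 10) :
    ∃ f : V → Set ℝ, (∀ a ∈ X, ∃ a1 a2 : ℝ, a1 ≤ a2 ∧ f a = Set.Icc a1 a2) ∧
      ∀ a ∈ X, ∀ b ∈ X, a ≠ b → (G.Adj a b ↔ (f a ∩ f b).Nonempty) := by
  classical
  obtain ⟨g, hg1, hg2⟩ := pr_small G hG X hX
  refine ⟨fun a => if h : a ∈ X then g ⟨a, h⟩ else Set.Icc 0 0, fun a ha => ?_, ?_⟩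
  · simp only [dif_pos ha]; exact hg1 ⟨a, ha⟩
  · intro a ha b hb hne
    simp only [dif_pos ha, dif_pos hb]
    exact hg2 ⟨a, ha⟩ ⟨b, hb⟩ (fun h => hne (congrArg Subtype.val h))

private lemma applyC4 {V : Type*} [Fintype V] (G : SimpleGraph V) (hG : Prereduced G)
    (A B C D : V)
    (hAB : G.Adj A B) (hBC : G.Adj B C) (hCD : G.Adj C D) (hDA : G.Adj D A)
    (hACne : A ≠ C) (hAC : ¬ G.Adj A C) (hBDne : B ≠ D) (hBD : ¬ G.Adj B D) : False := by
  obtain ⟨f, hicc, hadj⟩ := pr_rep G hG ({A, B, C, D, D, D, D} : Set V)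
    (pr_ncard7 _ _ _ _ _ _ _)
  have mA : A ∈ ({A, B, C, D, D, D, D} : Set V) := by simp
  have mB : B ∈ ({A, B, C, D, D, D, D} : Set V) := by simp
  have mC : C ∈ ({A, B, C, D, D, D, D} : Set V) := by simp
  have mD : D ∈ ({A, B, C, D, D, D, D} : Set V) := by simp
  obtain ⟨a1, a2, ha, hfA⟩ := hicc A mA
  obtain ⟨b1, b2, hb, hfB⟩ := hicc B mB
  obtain ⟨c1, c2, hc, hfC⟩ := hicc C mC
  obtain ⟨d1, d2, hd, hfD⟩ := hicc D mD
  have e1 : (f A ∩ f B).Nonempty := (hadj A mA B mB hAB.ne).mp hAB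
  have e2 : (f B ∩ f C).Nonempty := (hadj B mB C mC hBC.ne).mp hBC
  have e3 : (f C ∩ f D).Nonempty := (hadj C mC D mD hCD.ne).mp hCD
  have e4 : (f D ∩ f A).Nonempty := (hadj D mD A mA hDA.ne).mp hDA
  have d5 : f A ∩ f C = ∅ := Set.not_nonempty_iff_eq_empty.mp
    (fun hn => hAC ((hadj A mA C mC hACne).mpr hn))
  have d6 : f B ∩ f D = ∅ := Set.not_nonempty_iff_eq_empty.mp
    (fun hn => hBD ((hadj B mB D mD hBDne).mpr hn))
  simp only [hfA, hfB, hfC, hfD] at e1 e2 e3 e4 d5 d6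
  exact realC4 ha hb hc hd e1 e2 e3 e4 d5 d6

private lemma applyL2 {V : Type*} [Fintype V] (G : SimpleGraph V) (hG : Prereduced G)
    (u x A B C D : V)
    (hAB : G.Adj A B) (hCD : G.Adj C D) (hxB : G.Adj x B) (hxC : G.Adj x C)
    (huA : G.Adj u A) (huD : G.Adj u D)
    (hxune : x ≠ u) (hxu : ¬ G.Adj x u)
    (hACne : A ≠ C) (hAC : ¬ G.Adj A C)
    (hBDne : B ≠ D) (hBD : ¬ G.Adj B D)
    (hADne : A ≠ D) (hAD : ¬ G.Adj A D) : False := by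
  obtain ⟨f, hicc, hadj⟩ := pr_rep G hG ({u, x, A, B, C, D, D} : Set V)
    (pr_ncard7 _ _ _ _ _ _ _)
  have mu : u ∈ ({u, x, A, B, C, D, D} : Set V) := by simp
  have mx : x ∈ ({u, x, A, B, C, D, D} : Set V) := by simp
  have mA : A ∈ ({u, x, A, B, C, D, D} : Set V) := by simp
  have mB : B ∈ ({u, x, A, B, C, D, D} : Set V) := by simp
  have mC : C ∈ ({u, x, A, B, C, D, D} : Set V) := by simp
  have mD : D ∈ ({u, x, A, B, C, D, D} : Set V) := by simp
  obtain ⟨u1, u2, hu12, hfu⟩ := hicc u mu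
  obtain ⟨x1, x2, hx12, hfx⟩ := hicc x mx
  obtain ⟨p1, p2, hp12, hfA⟩ := hicc A mA
  obtain ⟨q1, q2, hq12, hfB⟩ := hicc B mB
  obtain ⟨r1, r2, hr12, hfC⟩ := hicc C mC
  obtain ⟨s1, s2, hs12, hfD⟩ := hicc D mD
  have e1 : (f u ∩ f A).Nonempty := (hadj u mu A mA huA.ne).mp huA
  have e2 : (f u ∩ f D).Nonempty := (hadj u mu D mD huD.ne).mp huD
  have e3 : (f x ∩ f B).Nonempty := (hadj x mx B mB hxB.ne).mp hxB
  have e4 : (f x ∩ f C).Nonempty := (hadj x mx C mC hxC.ne).mp hxC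
  have e5 : (f A ∩ f B).Nonempty := (hadj A mA B mB hAB.ne).mp hAB
  have e6 : (f C ∩ f D).Nonempty := (hadj C mC D mD hCD.ne).mp hCD
  have d1 : f A ∩ f D = ∅ := Set.not_nonempty_iff_eq_empty.mp
    (fun hn => hAD ((hadj A mA D mD hADne).mpr hn))
  have d2 : f A ∩ f C = ∅ := Set.not_nonempty_iff_eq_empty.mp
    (fun hn => hAC ((hadj A mA C mC hACne).mpr hn))
  have d3 : f B ∩ f D = ∅ := Set.not_nonempty_iff_eq_empty.mp
    (fun hn => hBD ((hadj B mB D mD hBDne).mpr hn))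
  have d4 : f x ∩ f u = ∅ := Set.not_nonempty_iff_eq_empty.mp
    (fun hn => hxu ((hadj x mx u mu hxune).mpr hn))
  simp only [hfu, hfx, hfA, hfB, hfC, hfD] at e1 e2 e3 e4 e5 e6 d1 d2 d3 d4
  exact realL2 hu12 hx12 hp12 hq12 hr12 hs12 e1 e2 e3 e4 e5 e6 d1 d2 d3 d4

private lemma applyL3b {V : Type*} [Fintype V] (G : SimpleGraph V) (hG : Prereduced G)
    (u x A B C D E : V)
    (hAB : G.Adj A B) (hBC : G.Adj B C) (hCD : G.Adj C D) (hDE : G.Adj D E)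
    (huB : G.Adj u B) (huD : G.Adj u D) (hxC : G.Adj x C)
    (hBDne : B ≠ D) (hBD : ¬ G.Adj B D)
    (hACne : A ≠ C) (hAC : ¬ G.Adj A C)
    (hCEne : C ≠ E) (hCE : ¬ G.Adj C E)
    (hxune : x ≠ u) (hxu : ¬ G.Adj x u)
    (hxBne : x ≠ B) (hxB : ¬ G.Adj x B)
    (hxDne : x ≠ D) (hxD : ¬ G.Adj x D) : False := by
  obtain ⟨f, hicc, hadj⟩ := pr_rep G hG ({u, x, A, B, C, D, E} : Set V)
    (pr_ncard7 _ _ _ _ _ _ _)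
  have mu : u ∈ ({u, x, A, B, C, D, E} : Set V) := by simp
  have mx : x ∈ ({u, x, A, B, C, D, E} : Set V) := by simp
  have mA : A ∈ ({u, x, A, B, C, D, E} : Set V) := by simp
  have mB : B ∈ ({u, x, A, B, C, D, E} : Set V) := by simp
  have mC : C ∈ ({u, x, A, B, C, D, E} : Set V) := by simp
  have mD : D ∈ ({u, x, A, B, C, D, E} : Set V) := by simp
  have mE : E ∈ ({u, x, A, B, C, D, E} : Set V) := by simp
  obtain ⟨u1, u2, hu12, hfu⟩ := hicc u mu
  obtain ⟨x1, x2, hx12, hfx⟩ := hicc x mx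
  obtain ⟨a1, a2, ha12, hfA⟩ := hicc A mA
  obtain ⟨b1, b2, hb12, hfB⟩ := hicc B mB
  obtain ⟨c1, c2, hc12, hfC⟩ := hicc C mC
  obtain ⟨d1, d2, hd12, hfD⟩ := hicc D mD
  obtain ⟨e1, e2, he12, hfE⟩ := hicc E mE
  have g1 : (f A ∩ f B).Nonempty := (hadj A mA B mB hAB.ne).mp hAB
  have g2 : (f B ∩ f C).Nonempty := (hadj B mB C mC hBC.ne).mp hBC
  have g3 : (f C ∩ f D).Nonempty := (hadj C mC D mD hCD.ne).mp hCD
  have g4 : (f D ∩ f E).Nonempty := (hadj D mD E mE hDE.ne).mp hDE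
  have g5 : (f u ∩ f B).Nonempty := (hadj u mu B mB huB.ne).mp huB
  have g6 : (f u ∩ f D).Nonempty := (hadj u mu D mD huD.ne).mp huD
  have g7 : (f x ∩ f C).Nonempty := (hadj x mx C mC hxC.ne).mp hxC
  have d1 : f B ∩ f D = ∅ := Set.not_nonempty_iff_eq_empty.mp
    (fun hn => hBD ((hadj B mB D mD hBDne).mpr hn))
  have d2 : f A ∩ f C = ∅ := Set.not_nonempty_iff_eq_empty.mp
    (fun hn => hAC ((hadj A mA C mC hACne).mpr hn))
  have d3 : f C ∩ f E = ∅ := Set.not_nonempty_iff_eq_empty.mp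
    (fun hn => hCE ((hadj C mC E mE hCEne).mpr hn))
  have d4 : f x ∩ f u = ∅ := Set.not_nonempty_iff_eq_empty.mp
    (fun hn => hxu ((hadj x mx u mu hxune).mpr hn))
  have d5 : f x ∩ f B = ∅ := Set.not_nonempty_iff_eq_empty.mp
    (fun hn => hxB ((hadj x mx B mB hxBne).mpr hn))
  have d6 : f x ∩ f D = ∅ := Set.not_nonempty_iff_eq_empty.mp
    (fun hn => hxD ((hadj x mx D mD hxDne).mpr hn))
  simp only [hfu, hfx, hfA, hfB, hfC, hfD, hfE] at g1 g2 g3 g4 g5 g6 g7 d1 d2 d3 d4 d5 d6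
  exact realL3b hu12 hx12 ha12 hb12 hc12 hd12 he12 g1 g2 g3 g4 g5 g6 g7 d1 d2 d3 d4 d5 d6

end InternalAux

section InternalCore

variable {V : Type*} [Fintype V] {G : SimpleGraph V}

private lemma core1 (hG : Prereduced G) (p : ℕ) (w : ℕ → V)
    (hwinj : ∀ a, a ≤ p → ∀ b, b ≤ p → w a = w b → a = b)
    (hwadj : ∀ a, a ≤ p → ∀ b, b ≤ p → (G.Adj (w a) (w b) ↔ a + 1 = b ∨ b + 1 = a))
    (u x : V) (hu : ∀ k, k ≤ p → G.Adj u (w k))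
    (hp : 4 ≤ p) (ℓ : ℕ) (h2 : 2 ≤ ℓ) (hl : ℓ ≤ p - 2)
    (hxl : G.Adj x (w ℓ))
    (hxune : x ≠ u) (hxadj : ¬ G.Adj u x) : False := by
  classical
  have hxu' : ¬ G.Adj x u := fun h => hxadj h.symm
  have wne : ∀ a b, a ≤ p → b ≤ p → a ≠ b → w a ≠ w b :=
    fun a b ha hb hne he => hne (hwinj a ha b hb he)
  have wnadj : ∀ a b, a ≤ p → b ≤ p → a + 1 ≠ b → b + 1 ≠ a → ¬ G.Adj (w a) (w b) :=
    fun a b ha hb h1 h2 h => by rcases (hwadj a ha b hb).mp h with h3 | h3 <;> omega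
  have wadj : ∀ a b, a ≤ p → b ≤ p → a + 1 = b → G.Adj (w a) (w b) :=
    fun a b ha hb h => (hwadj a ha b hb).mpr (Or.inl h)
  have hxw : ∀ k, k ≤ p → x ≠ w k := fun k hk he => hxadj (he ▸ hu k hk)
  by_cases hS : ∃ k, k ≤ ℓ - 1 ∧ ¬ G.Adj x (w k)
  · by_cases hT : ∃ k, ℓ < k ∧ k ≤ p ∧ ¬ G.Adj x (w k)
    · obtain ⟨k₀, hk₀1, hk₀2⟩ := hS
      obtain ⟨i, hiP, hile, hiG⟩ :
          ∃ i, ¬ G.Adj x (w i) ∧ i ≤ ℓ - 1 ∧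
            ∀ m, i < m → m ≤ ℓ - 1 → G.Adj x (w m) := by
        refine ⟨Nat.findGreatest (fun k => ¬ G.Adj x (w k)) (ℓ - 1),
          Nat.findGreatest_spec (P := fun k => ¬ G.Adj x (w k)) hk₀1 hk₀2,
          Nat.findGreatest_le _, ?_⟩
        intro m hm1 hm2
        exact not_not.mp (Nat.findGreatest_is_greatest hm1 hm2)
      obtain ⟨j, hj1, hj2, hj3, hjG⟩ :
          ∃ j, ℓ < j ∧ j ≤ p ∧ ¬ G.Adj x (w j) ∧
            ∀ m, ℓ < m → m < j → G.Adj x (w m) := by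
        obtain ⟨ha1, ha2, ha3⟩ := Nat.find_spec hT
        refine ⟨Nat.find hT, ha1, ha2, ha3, ?_⟩
        intro m hm1 hm2
        by_contra hmn
        exact Nat.find_min hT hm2 ⟨hm1, by omega, hmn⟩
      have hmid : ∀ m, i < m → m < j → G.Adj x (w m) := by
        intro m hm1 hm2
        rcases lt_trichotomy m ℓ with h | h | h
        · exact hiG m hm1 (by omega)
        · rw [h]; exact hxl
        · exact hjG m h hm2
      by_cases hd : j = i + 2
      · have hi : i = ℓ - 1 := by omega
        have hj : j = ℓ + 1 := by omega
        rw [hi] at hiP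
        rw [hj] at hj3
        exact applyL3b G hG u x (w (ℓ - 2)) (w (ℓ - 1)) (w ℓ) (w (ℓ + 1)) (w (ℓ + 2))
          (wadj _ _ (by omega) (by omega) (by omega))
          (wadj _ _ (by omega) (by omega) (by omega))
          (wadj _ _ (by omega) (by omega) (by omega))
          (wadj _ _ (by omega) (by omega) (by omega))
          (hu (ℓ - 1) (by omega)) (hu (ℓ + 1) (by omega)) hxl
          (wne _ _ (by omega) (by omega) (by omega))
          (wnadj _ _ (by omega) (by omega) (by omega) (by omega))
          (wne _ _ (by omega) (by omega) (by omega))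
          (wnadj _ _ (by omega) (by omega) (by omega) (by omega))
          (wne _ _ (by omega) (by omega) (by omega))
          (wnadj _ _ (by omega) (by omega) (by omega) (by omega))
          hxune hxu'
          (hxw _ (by omega)) hiP
          (hxw _ (by omega)) hj3
      · have hij : i + 3 ≤ j := by omega
        exact applyL2 G hG u x (w i) (w (i + 1)) (w (j - 1)) (w j)
          (wadj _ _ (by omega) (by omega) (by omega))
          (wadj _ _ (by omega) (by omega) (by omega))
          (hmid (i + 1) (by omega) (by omega))
          (hmid (j - 1) (by omega) (by omega))
          (hu i (by omega)) (hu j (by omega))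
          hxune hxu'
          (wne _ _ (by omega) (by omega) (by omega))
          (wnadj _ _ (by omega) (by omega) (by omega) (by omega))
          (wne _ _ (by omega) (by omega) (by omega))
          (wnadj _ _ (by omega) (by omega) (by omega) (by omega))
          (wne _ _ (by omega) (by omega) (by omega))
          (wnadj _ _ (by omega) (by omega) (by omega) (by omega))
    · push_neg at hT
      have h1 : G.Adj x (w (ℓ + 2)) := hT (ℓ + 2) (by omega) (by omega)
      exact applyC4 G hG x (w ℓ) u (w (ℓ + 2))
        hxl (hu ℓ (by omega)).symm (hu (ℓ + 2) (by omega)) h1.symm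
        hxune hxu'
        (wne _ _ (by omega) (by omega) (by omega))
        (wnadj _ _ (by omega) (by omega) (by omega) (by omega))
  · push_neg at hS
    have h1 : G.Adj x (w (ℓ - 2)) := hS (ℓ - 2) (by omega)
    exact applyC4 G hG x (w ℓ) u (w (ℓ - 2))
      hxl (hu ℓ (by omega)).symm (hu (ℓ - 2) (by omega)) h1.symm
      hxune hxu'
      (wne _ _ (by omega) (by omega) (by omega))
      (wnadj _ _ (by omega) (by omega) (by omega) (by omega))

private lemma core2 (hG : Prereduced G) (p : ℕ) (w : ℕ → V)
    (hwinj : ∀ a, a ≤ p → ∀ b, b ≤ p → w a = w b → a = b)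
    (hwadj : ∀ a, a ≤ p → ∀ b, b ≤ p → (G.Adj (w a) (w b) ↔ a + 1 = b ∨ b + 1 = a))
    (u x : V) (hu : ∀ k, k ≤ p → G.Adj u (w k))
    (hp : 3 ≤ p) (ℓ : ℕ) (h1 : 1 ≤ ℓ) (hl : ℓ ≤ p - 2)
    (hxl : G.Adj x (w ℓ)) (hxl1 : G.Adj x (w (ℓ + 1)))
    (hxune : x ≠ u) (hxadj : ¬ G.Adj u x) : False := by
  have hxu' : ¬ G.Adj x u := fun h => hxadj h.symm
  have wne : ∀ a b, a ≤ p → b ≤ p → a ≠ b → w a ≠ w b :=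
    fun a b ha hb hne he => hne (hwinj a ha b hb he)
  have wnadj : ∀ a b, a ≤ p → b ≤ p → a + 1 ≠ b → b + 1 ≠ a → ¬ G.Adj (w a) (w b) :=
    fun a b ha hb h1 h2 h => by rcases (hwadj a ha b hb).mp h with h3 | h3 <;> omega
  have wadj : ∀ a b, a ≤ p → b ≤ p → a + 1 = b → G.Adj (w a) (w b) :=
    fun a b ha hb h => (hwadj a ha b hb).mpr (Or.inl h)
  exact applyL2 G hG u x (w (ℓ - 1)) (w ℓ) (w (ℓ + 1)) (w (ℓ + 2))
    (wadj _ _ (by omega) (by omega) (by omega))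
    (wadj _ _ (by omega) (by omega) (by omega))
    hxl hxl1
    (hu (ℓ - 1) (by omega)) (hu (ℓ + 2) (by omega))
    hxune hxu'
    (wne _ _ (by omega) (by omega) (by omega))
    (wnadj _ _ (by omega) (by omega) (by omega) (by omega))
    (wne _ _ (by omega) (by omega) (by omega))
    (wnadj _ _ (by omega) (by omega) (by omega) (by omega))
    (wne _ _ (by omega) (by omega) (by omega))
    (wnadj _ _ (by omega) (by omega) (by omega) (by omega))

private lemma core3 (hG : Prereduced G) (p : ℕ) (w : ℕ → V)
    (hwinj : ∀ a, a ≤ p → ∀ b, b ≤ p → w a = w b → a = b)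
    (hwadj : ∀ a, a ≤ p → ∀ b, b ≤ p → (G.Adj (w a) (w b) ↔ a + 1 = b ∨ b + 1 = a))
    (u x : V) (hu : ∀ k, 0 < k → k < p → G.Adj u (w k))
    (hp : 4 ≤ p) (ℓ : ℕ) (h2 : 2 ≤ ℓ) (hl : ℓ ≤ p - 2)
    (hxl : G.Adj x (w ℓ))
    (hx1 : ¬ G.Adj x (w 1)) (hxp1 : ¬ G.Adj x (w (p - 1)))
    (hxune : x ≠ u) (hxadj : ¬ G.Adj u x) : False := by
  classical
  have hxu' : ¬ G.Adj x u := fun h => hxadj h.symm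
  have wne : ∀ a b, a ≤ p → b ≤ p → a ≠ b → w a ≠ w b :=
    fun a b ha hb hne he => hne (hwinj a ha b hb he)
  have wnadj : ∀ a b, a ≤ p → b ≤ p → a + 1 ≠ b → b + 1 ≠ a → ¬ G.Adj (w a) (w b) :=
    fun a b ha hb h1 h2 h => by rcases (hwadj a ha b hb).mp h with h3 | h3 <;> omega
  have wadj : ∀ a b, a ≤ p → b ≤ p → a + 1 = b → G.Adj (w a) (w b) :=
    fun a b ha hb h => (hwadj a ha b hb).mpr (Or.inl h)
  have hxw : ∀ k, 0 < k → k < p → x ≠ w k := fun k hk1 hk2 he => hxadj (he ▸ hu k hk1 hk2)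
  obtain ⟨i, hi1, hiP2, hile, hiG⟩ :
      ∃ i, 1 ≤ i ∧ ¬ G.Adj x (w i) ∧ i ≤ ℓ - 1 ∧
        ∀ m, i < m → m ≤ ℓ - 1 → G.Adj x (w m) := by
    have hsp := Nat.findGreatest_spec (P := fun k => 1 ≤ k ∧ ¬ G.Adj x (w k))
      (n := ℓ - 1) (m := 1) (by omega) ⟨le_refl 1, hx1⟩
    refine ⟨Nat.findGreatest (fun k => 1 ≤ k ∧ ¬ G.Adj x (w k)) (ℓ - 1),
      hsp.1, hsp.2, Nat.findGreatest_le _, ?_⟩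
    intro m hm1 hm2
    have hgr := Nat.findGreatest_is_greatest
      (P := fun k => 1 ≤ k ∧ ¬ G.Adj x (w k)) hm1 hm2
    by_contra hmn
    exact hgr ⟨by omega, hmn⟩
  have hT : ∃ k, ℓ < k ∧ k ≤ p - 1 ∧ ¬ G.Adj x (w k) := ⟨p - 1, by omega, le_refl _, hxp1⟩
  obtain ⟨j, hj1, hj2, hj3, hjG⟩ :
      ∃ j, ℓ < j ∧ j ≤ p - 1 ∧ ¬ G.Adj x (w j) ∧
        ∀ m, ℓ < m → m < j → G.Adj x (w m) := by
    obtain ⟨ha1, ha2, ha3⟩ := Nat.find_spec hT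
    refine ⟨Nat.find hT, ha1, ha2, ha3, ?_⟩
    intro m hm1 hm2
    by_contra hmn
    exact Nat.find_min hT hm2 ⟨hm1, by omega, hmn⟩
  have hmid : ∀ m, i < m → m < j → G.Adj x (w m) := by
    intro m hm1 hm2
    rcases lt_trichotomy m ℓ with h | h | h
    · exact hiG m hm1 (by omega)
    · rw [h]; exact hxl
    · exact hjG m h hm2
  by_cases hd : j = i + 2
  · have hi : i = ℓ - 1 := by omega
    have hj : j = ℓ + 1 := by omega
    rw [hi] at hiP2
    rw [hj] at hj3
    exact applyL3b G hG u x (w (ℓ - 2)) (w (ℓ - 1)) (w ℓ) (w (ℓ + 1)) (w (ℓ + 2))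
      (wadj _ _ (by omega) (by omega) (by omega))
      (wadj _ _ (by omega) (by omega) (by omega))
      (wadj _ _ (by omega) (by omega) (by omega))
      (wadj _ _ (by omega) (by omega) (by omega))
      (hu (ℓ - 1) (by omega) (by omega)) (hu (ℓ + 1) (by omega) (by omega)) hxl
      (wne _ _ (by omega) (by omega) (by omega))
      (wnadj _ _ (by omega) (by omega) (by omega) (by omega))
      (wne _ _ (by omega) (by omega) (by omega))
      (wnadj _ _ (by omega) (by omega) (by omega) (by omega))
      (wne _ _ (by omega) (by omega) (by omega))
      (wnadj _ _ (by omega) (by omega) (by omega) (by omega))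
      hxune hxu'
      (hxw _ (by omega) (by omega)) hiP2
      (hxw _ (by omega) (by omega)) hj3
  · have hij : i + 3 ≤ j := by omega
    exact applyL2 G hG u x (w i) (w (i + 1)) (w (j - 1)) (w j)
      (wadj _ _ (by omega) (by omega) (by omega))
      (wadj _ _ (by omega) (by omega) (by omega))
      (hmid (i + 1) (by omega) (by omega))
      (hmid (j - 1) (by omega) (by omega))
      (hu i (by omega) (by omega)) (hu j (by omega) (by omega))
      hxune hxu'
      (wne _ _ (by omega) (by omega) (by omega))
      (wnadj _ _ (by omega) (by omega) (by omega) (by omega))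
      (wne _ _ (by omega) (by omega) (by omega))
      (wnadj _ _ (by omega) (by omega) (by omega) (by omega))
      (wne _ _ (by omega) (by omega) (by omega))
      (wnadj _ _ (by omega) (by omega) (by omega) (by omega))

end InternalCore

/-- Properties of a vertex adjacent to all inner vertices of a chordless
path in a prereduced graph. -/
theorem stmt_3 {V : Type*} [Fintype V] (G : SimpleGraph V) (hG : Prereduced G)
    (p : ℕ) (v : Fin (p + 1) → V) (hinj : Function.Injective v)
    (hpath : ∀ i j : Fin (p + 1),
      G.Adj (v i) (v j) ↔ (i.val + 1 = j.val ∨ j.val + 1 = i.val))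
    (u : V) (hu : ∀ i : Fin (p + 1), 0 < i.val → i.val < p → G.Adj u (v i)) :
    (∀ (hp : 4 ≤ p), G.Adj u (v 0) → G.Adj u (v (Fin.last p)) →
      ∀ ℓ : ℕ, ∀ (h2 : 2 ≤ ℓ) (hℓ : ℓ ≤ p - 2),
        closedNbhd G (v ⟨ℓ, by omega⟩) ⊆ closedNbhd G u) ∧
    (∀ (hp : 3 ≤ p), G.Adj u (v 0) → G.Adj u (v (Fin.last p)) →
      ∀ ℓ : ℕ, ∀ (h1 : 1 ≤ ℓ) (hℓ : ℓ ≤ p - 2),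
        closedNbhd G (v ⟨ℓ, by omega⟩) ∩ closedNbhd G (v ⟨ℓ + 1, by omega⟩) ⊆
          closedNbhd G u) ∧
    (∀ (hp : 4 ≤ p),
      ∀ ℓ : ℕ, ∀ (h2 : 2 ≤ ℓ) (hℓ : ℓ ≤ p - 2),
        closedNbhd G (v ⟨ℓ, by omega⟩) \
            (G.neighborSet (v ⟨1, by omega⟩) ∪ G.neighborSet (v ⟨p - 1, by omega⟩)) ⊆
          closedNbhd G u) := by
  
  classical
  have hwlt : ∀ k : ℕ, min k p < p + 1 := fun k => Nat.lt_succ_of_le (min_le_right k p)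
  set w : ℕ → V := fun k => v ⟨min k p, hwlt k⟩ with hwdef
  have hwval : ∀ k, ∀ hk : k ≤ p, w k = v ⟨k, by omega⟩ := by
    intro k hk
    simp only [hwdef]
    exact congrArg v (Fin.ext (min_eq_left hk))
  have hwinj : ∀ a, a ≤ p → ∀ b, b ≤ p → w a = w b → a = b := by
    intro a ha b hb he
    rw [hwval a ha, hwval b hb] at he
    exact congrArg Fin.val (hinj he)
  have hwadj : ∀ a, a ≤ p → ∀ b, b ≤ p → (G.Adj (w a) (w b) ↔ a + 1 = b ∨ b + 1 = a) := by
    intro a ha b hb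
    rw [hwval a ha, hwval b hb]
    exact hpath _ _
  have h00 : ∀ h : (0:ℕ) < p + 1, v 0 = v ⟨0, h⟩ := fun h => congrArg v (Fin.ext (by simp))
  have hlast : ∀ h : p < p + 1, v (Fin.last p) = v ⟨p, h⟩ := fun h => rfl
  have huw : ∀ k, 0 < k → k < p → G.Adj u (w k) := by
    intro k h1 h2
    rw [hwval k (by omega)]
    exact hu ⟨k, by omega⟩ h1 h2
  refine ⟨?_, ?_, ?_⟩
  · -- Statement 1
    intro hp hu0 hup ℓ h2 hl x hx
    by_contra hxnu
    simp only [closedNbhd, Set.mem_insert_iff, SimpleGraph.mem_neighborSet] at hx hxnu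
    push_neg at hxnu
    obtain ⟨hxne, hxadj⟩ := hxnu
    have hu_all : ∀ k, k ≤ p → G.Adj u (w k) := by
      intro k hk
      rcases Nat.eq_zero_or_pos k with h | h
      · subst h
        rw [hwval 0 (by omega)]
        exact (h00 (by omega)) ▸ hu0
      · rcases Nat.lt_or_ge k p with h' | h'
        · exact huw k h h'
        · have hkp : k = p := by omega
          have hwk : w k = v (Fin.last p) := by
            rw [hwval k hk]
            exact congrArg v (Fin.ext (by simp [hkp]))
          rw [hwk]
          exact hup
    have hxl : G.Adj x (w ℓ) := by
      rcases hx with he | ha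
      · exfalso
        have h3 := hu_all ℓ (by omega)
        rw [hwval ℓ (by omega)] at h3
        rw [he] at hxadj
        exact hxadj h3
      · rw [hwval ℓ (by omega)]
        exact ha.symm
    exact core1 hG p w hwinj hwadj u x hu_all hp ℓ h2 hl hxl hxne hxadj
  · -- Statement 2
    intro hp hu0 hup ℓ h1 hl x hx
    by_contra hxnu
    obtain ⟨hxa, hxb⟩ := hx
    simp only [closedNbhd, Set.mem_insert_iff, SimpleGraph.mem_neighborSet] at hxa hxb hxnu
    push_neg at hxnu
    obtain ⟨hxne, hxadj⟩ := hxnu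
    have hu_all : ∀ k, k ≤ p → G.Adj u (w k) := by
      intro k hk
      rcases Nat.eq_zero_or_pos k with h | h
      · subst h
        rw [hwval 0 (by omega)]
        exact (h00 (by omega)) ▸ hu0
      · rcases Nat.lt_or_ge k p with h' | h'
        · exact huw k h h'
        · have hkp : k = p := by omega
          have hwk : w k = v (Fin.last p) := by
            rw [hwval k hk]
            exact congrArg v (Fin.ext (by simp [hkp]))
          rw [hwk]
          exact hup
    have hxl : G.Adj x (w ℓ) := by
      rcases hxa with he | ha
      · exfalso
        have h3 := hu_all ℓ (by omega)
        rw [hwval ℓ (by omega)] at h3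
        rw [he] at hxadj
        exact hxadj h3
      · rw [hwval ℓ (by omega)]
        exact ha.symm
    have hxl1 : G.Adj x (w (ℓ + 1)) := by
      rcases hxb with he | ha
      · exfalso
        have h3 := hu_all (ℓ + 1) (by omega)
        rw [hwval (ℓ + 1) (by omega)] at h3
        rw [he] at hxadj
        exact hxadj h3
      · rw [hwval (ℓ + 1) (by omega)]
        exact ha.symm
    exact core2 hG p w hwinj hwadj u x hu_all hp ℓ h1 hl hxl hxl1 hxne hxadj
  · -- Statement 3
    intro hp ℓ h2 hl x hx
    by_contra hxnu
    obtain ⟨hxa, hxb⟩ := hx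
    simp only [closedNbhd, Set.mem_insert_iff, SimpleGraph.mem_neighborSet,
      Set.mem_union, SimpleGraph.mem_neighborSet] at hxa hxb hxnu
    push_neg at hxnu
    obtain ⟨hxne, hxadj⟩ := hxnu
    push_neg at hxb
    obtain ⟨hxb1, hxb2⟩ := hxb
    have hxl : G.Adj x (w ℓ) := by
      rcases hxa with he | ha
      · exfalso
        have h3 := huw ℓ (by omega) (by omega)
        rw [hwval ℓ (by omega)] at h3
        rw [he] at hxadj
        exact hxadj h3
      · rw [hwval ℓ (by omega)]
        exact ha.symm
    have hx1 : ¬ G.Adj x (w 1) := by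
      rw [hwval 1 (by omega)]
      exact fun h => hxb1 h.symm
    have hxp1 : ¬ G.Adj x (w (p - 1)) := by
      rw [hwval (p - 1) (by omega)]
      exact fun h => hxb2 h.symm
    exact core3 hG p w hwinj hwadj u x huw hp ℓ h2 hl hxl hx1 hxp1 hxne hxadj
end

section
/- Let G be a finite graph containing no induced 4-cycle and let M be a module of G. Then every minimum interval deletion set Q of G satisfies: either M ⊆ Q, or Q ∩ M is a minimum interval deletion set of the induced subgraph G[M]. -/
section helpers

lemma aux_icc {a b c d : ℝ} (hab : a ≤ b) (hcd : c ≤ d) :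
    (Set.Icc a b ∩ Set.Icc c d).Nonempty ↔ a ≤ d ∧ c ≤ b := by
  rw [Set.Icc_inter_Icc, Set.nonempty_Icc]
  constructor <;> intro h
  · exact ⟨(max_le_iff.1 (h.trans (min_le_right _ _))).1,
      (max_le_iff.1 (h.trans (min_le_left _ _))).2⟩
  · exact max_le (le_min hab h.1) (le_min h.2 hcd)

lemma aux_emb {A B : Type*} (G : SimpleGraph A) (H : SimpleGraph B) (φ : B → A)
    (hinj : Function.Injective φ) (hadj : ∀ u v : B, H.Adj u v ↔ G.Adj (φ u) (φ v))
    (hG : IsIntervalGraph G) : IsIntervalGraph H := by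
  obtain ⟨f, h1, h2⟩ := hG
  exact ⟨f ∘ φ, fun v => h1 (φ v),
    fun u v huv => (hadj u v).trans (h2 (φ u) (φ v) (fun h => huv (hinj h)))⟩

set_option linter.unreachableTactic false in
set_option linter.unusedTactic false in
lemma aux_c4 {V : Type*} (G : SimpleGraph V) (u x v y : V)
    (huv : ¬ G.Adj u v) (hxy : ¬ G.Adj x y)
    (hux : G.Adj u x) (hxv : G.Adj x v) (hvy : G.Adj v y) (hyu : G.Adj y u)
    (huv' : u ≠ v) (hxy' : x ≠ y) (hu_x : u ≠ x) (hu_y : u ≠ y)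
    (hv_x : v ≠ x) (hv_y : v ≠ y) :
    ∃ H : Set V, IsHole G H ∧ H.ncard = 4 := by
  have henum : ∀ i : ZMod 4, i = 0 ∨ i = 1 ∨ i = 2 ∨ i = 3 := by decide
  set f : ZMod 4 → V := fun i => if i = 0 then u else if i = 1 then x else if i = 2 then v else y with hf
  have hf0 : f 0 = u := by simp [hf]
  have hf1 : f 1 = x := by norm_num [hf, (by decide : (1:ZMod 4) ≠ 0)]
  have hf2 : f 2 = v := by
    norm_num [hf, (by decide : (2:ZMod 4) ≠ 0), (by decide : (2:ZMod 4) ≠ 1)]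
  have hf3 : f 3 = y := by
    norm_num [hf, (by decide : (3:ZMod 4) ≠ 0), (by decide : (3:ZMod 4) ≠ 1),
      (by decide : (3:ZMod 4) ≠ 2)]
  clear_value f
  refine ⟨Set.range f, ⟨4, le_refl 4, f, ?_, rfl, ?_⟩, ?_⟩
  · intro i j hij
    rcases henum i with hi | hi | hi | hi <;> rcases henum j with hj | hj | hj | hj <;>
      subst hi <;> subst hj <;>
      simp_all [hf0, hf1, hf2, hf3]
  · intro i j
    rcases henum i with hi | hi | hi | hi <;> rcases henum j with hj | hj | hj | hj <;>
      subst hi <;> subst hj <;> simp only [hf0, hf1, hf2, hf3] <;>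
      first
        | (refine iff_of_true ?_ (by decide); first
            | exact hux | exact hxv | exact hvy | exact hyu
            | exact G.adj_symm hux | exact G.adj_symm hxv
            | exact G.adj_symm hvy | exact G.adj_symm hyu)
        | (refine iff_of_false ?_ (by decide); first
            | exact G.loopless.irrefl _ | exact huv | exact hxy
            | exact fun h => huv (G.adj_symm h) | exact fun h => hxy (G.adj_symm h))
  · have hr : Set.range f = {u, x, v, y} := by
      ext z
      constructor
      · rintro ⟨i, rfl⟩
        rcases henum i with hi | hi | hi | hi <;> subst hi <;> simp [hf0, hf1, hf2, hf3]
      · rintro (rfl | rfl | rfl | rfl)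
        exacts [⟨0, hf0⟩, ⟨1, hf1⟩, ⟨2, hf2⟩, ⟨3, hf3⟩]
    rw [hr, Set.ncard_insert_of_notMem (by simp [hu_x, hu_y, huv']) (Set.toFinite _),
      Set.ncard_insert_of_notMem (by simp [hxy', (Ne.symm hv_x : x ≠ v)]) (Set.toFinite _),
      Set.ncard_insert_of_notMem (by simp [hv_y]) (Set.toFinite _), Set.ncard_singleton]

end helpers

/-- In a graph with no induced 4-cycle, a minimum interval deletion set
either contains a module `M` or meets it in a minimum interval deletion set of `G[M]`. -/
theorem stmt_6 {V : Type*} [Fintype V] (G : SimpleGraph V)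
    (h4 : ¬ ∃ H : Set V, IsHole G H ∧ H.ncard = 4)
    (M : Set V) (hM : IsGraphModule G M)
    (Q : Set V) (hQ : MinIntervalDeletionSet G Q) :
    M ⊆ Q ∨ MinIntervalDeletionSet (G.induce M) (Subtype.val ⁻¹' Q) := by
  classical
  by_cases hMQ : M ⊆ Q
  · exact Or.inl hMQ
  right
  have hw : ∃ w, w ∈ M ∧ w ∉ Q := Set.not_subset.1 hMQ
  obtain ⟨w, hwM, hwQ⟩ := hw
  obtain ⟨f, hf1, hf2⟩ := hQ.1
  choose a b hab hfab using hf1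
  -- Part 1: it is an interval deletion set
  have hdel : IntervalDeletionSet (G.induce M) (Subtype.val ⁻¹' Q) := by
    refine aux_emb (G.induce Qᶜ) _ (fun y => (⟨y.1.1, y.2⟩ : ↥Qᶜ)) ?_ (fun u v => Iff.rfl)
      ⟨f, fun v => ⟨a v, b v, hab v, hfab v⟩, hf2⟩
    intro y z h
    have h' : ((⟨y.1.1, y.2⟩ : ↥Qᶜ) : V) = ((⟨z.1.1, z.2⟩ : ↥Qᶜ) : V) :=
      congrArg Subtype.val h
    apply Subtype.ext
    apply Subtype.ext
    exact h'
  refine ⟨hdel, ?_⟩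
  intro Q'' hQ''
  by_contra hlt
  push_neg at hlt
  by_cases hclq : ∀ p ∈ M, ∀ q ∈ M, p ≠ q → G.Adj p q
  · -- M is a clique: show Q ∩ M is empty
    have hempty : Subtype.val ⁻¹' Q = (∅ : Set ↥M) := by
      by_contra hne
      obtain ⟨m0, hm0⟩ := Set.nonempty_iff_ne_empty.2 hne
      have hmM : (m0 : V) ∈ M := m0.2
      have hmQ : (m0 : V) ∈ Q := hm0
      have hmw : (m0 : V) ≠ w := fun h => hwQ (h ▸ hmQ)
      have hdel2 : IntervalDeletionSet G (Q \ {(m0 : V)}) := by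
        set m : V := (m0 : V) with hmdef
        have hFm : ∀ v : ↥(Q \ {m})ᶜ, (v : V) ≠ m → (v : V) ∉ Q :=
          fun v hv hQv => v.2 ⟨hQv, hv⟩
        set F : ↥(Q \ {m})ᶜ → ↥Qᶜ :=
          fun v => if hv : (v : V) = m then ⟨w, hwQ⟩ else ⟨(v : V), hFm v hv⟩ with hF
        have key : ∀ s r : ↥(Q \ {m})ᶜ, (s : V) = m → (r : V) ≠ m →
            (G.Adj (s : V) (r : V) ↔ (f (F s) ∩ f (F r)).Nonempty) := by
          intro s r hs hr
          have hFs : F s = ⟨w, hwQ⟩ := by rw [hF]; exact dif_pos hs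
          have hFr : F r = ⟨(r : V), hFm r hr⟩ := by rw [hF]; exact dif_neg hr
          rw [hFs, hFr, hs]
          by_cases hrw : (r : V) = w
          · refine iff_of_true (hrw ▸ hclq m hmM w hwM hmw) ?_
            have : (⟨(r : V), hFm r hr⟩ : ↥Qᶜ) = ⟨w, hwQ⟩ := Subtype.ext hrw
            rw [this, Set.inter_self, hfab]
            exact Set.nonempty_Icc.2 (hab _)
          · have hiff : (f (⟨w, hwQ⟩ : ↥Qᶜ) ∩ f ⟨(r : V), hFm r hr⟩).Nonempty ↔
                G.Adj w (r : V) :=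
              (hf2 (⟨w, hwQ⟩ : ↥Qᶜ) ⟨(r : V), hFm r hr⟩
                (fun hh => hrw (congrArg Subtype.val hh).symm)).symm
            rw [hiff]
            by_cases hrM : (r : V) ∈ M
            · exact iff_of_true (hclq m hmM (r : V) hrM (Ne.symm hr))
                (hclq w hwM (r : V) hrM (fun hh => hrw hh.symm))
            · exact hM m hmM w hwM (r : V) hrM
        refine ⟨fun v => f (F v), fun v => ⟨a (F v), b (F v), hab _, hfab _⟩, ?_⟩
        intro u v huv
        change G.Adj (u : V) (v : V) ↔ (f (F u) ∩ f (F v)).Nonempty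
        by_cases hu : (u : V) = m <;> by_cases hv : (v : V) = m
        · exact absurd (Subtype.ext (hu.trans hv.symm)) huv
        · exact key u v hu hv
        · rw [G.adj_comm, Set.inter_comm]
          exact key v u hv hu
        · have hFu : F u = ⟨(u : V), hFm u hu⟩ := by rw [hF]; exact dif_neg hu
          have hFv : F v = ⟨(v : V), hFm v hv⟩ := by rw [hF]; exact dif_neg hv
          rw [hFu, hFv]
          exact hf2 ⟨(u : V), hFm u hu⟩ ⟨(v : V), hFm v hv⟩
            (fun hh => huv (Subtype.ext (show (u : V) = (v : V) from
              congrArg (Subtype.val : ↥Qᶜ → V) hh)))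
      have h1 := hQ.2 _ hdel2
      have h2 := Set.ncard_diff_singleton_lt_of_mem hmQ (Set.toFinite Q)
      omega
    rw [hempty] at hlt
    simp at hlt
  · -- M is not a clique
    push_neg at hclq
    obtain ⟨p, hpM, q, hqM, hpq, hpqA⟩ := hclq
    obtain ⟨g, hg1, hg2⟩ := hQ''
    choose c d hcd hgab using hg1
    have hXclq : ∀ x y : V, x ∉ M → y ∉ M → G.Adj w x → G.Adj w y → x ≠ y → G.Adj x y := by
      intro x y hxM hyM hwx hwy hxy
      by_contra hxyA
      refine h4 (aux_c4 G p x q y hpqA hxyA ?_ ?_ ?_ ?_ hpq hxy ?_ ?_ ?_ ?_)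
      · exact (hM p hpM w hwM x hxM).2 hwx
      · exact G.adj_symm ((hM q hqM w hwM x hxM).2 hwx)
      · exact (hM q hqM w hwM y hyM).2 hwy
      · exact G.adj_symm ((hM p hpM w hwM y hyM).2 hwy)
      · exact fun h => hxM (h ▸ hpM)
      · exact fun h => hyM (h ▸ hpM)
      · exact fun h => hxM (h ▸ hqM)
      · exact fun h => hyM (h ▸ hqM)
    haveI : Fintype ↥Qᶜ := Fintype.ofFinite _
    set S : Finset ↥Qᶜ :=
      insert ⟨w, hwQ⟩ (Finset.univ.filter (fun x : ↥Qᶜ => (x : V) ∉ M ∧ G.Adj w (x : V)))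
      with hS
    have hSne : S.Nonempty := ⟨⟨w, hwQ⟩, Finset.mem_insert_self _ _⟩
    set t : ℝ := S.sup' hSne a with ht
    have hmemS : ∀ z : ↥Qᶜ, z ∈ S → z = ⟨w, hwQ⟩ ∨ ((z : V) ∉ M ∧ G.Adj w (z : V)) := by
      intro z hz
      rw [hS] at hz
      rcases Finset.mem_insert.1 hz with h | h
      · exact Or.inl h
      · exact Or.inr (Finset.mem_filter.1 h).2
    have htmem : ∀ x ∈ S, a x ≤ t ∧ t ≤ b x := by
      intro x hx
      refine ⟨Finset.le_sup' a hx, ?_⟩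
      obtain ⟨x0, hx0S, hx0⟩ := Finset.exists_mem_eq_sup' hSne a
      rw [ht, hx0]
      by_cases hxx : x0 = x
      · rw [hxx]; exact hab x
      · have hadj : G.Adj (x0 : V) (x : V) := by
          rcases hmemS x0 hx0S with h0 | h0 <;> rcases hmemS x hx with h1 | h1
          · exact absurd (h0.trans h1.symm) hxx
          · rw [h0]; exact h1.2
          · rw [h1]; exact G.adj_symm h0.2
          · exact hXclq _ _ h0.1 h1.1 h0.2 h1.2 (fun h => hxx (Subtype.ext h))
        have hnon : (f x0 ∩ f x).Nonempty := (hf2 x0 x hxx).1 hadj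
        rw [hfab, hfab] at hnon
        exact ((aux_icc (hab x0) (hab x)).1 hnon).1
    set R : Set V := (Q \ M) ∪ (Subtype.val '' Q'') with hR
    have hRlt : R.ncard < Q.ncard := by
      have h1 : (Subtype.val '' Q'').ncard = Q''.ncard :=
        Set.ncard_image_of_injective _ Subtype.val_injective
      have h2 : (Subtype.val ⁻¹' Q : Set ↥M).ncard = (Q ∩ M).ncard := by
        rw [← Set.ncard_image_of_injective (Subtype.val ⁻¹' Q) Subtype.val_injective,
          Subtype.image_preimage_coe, Set.inter_comm]
      have h3 := Set.ncard_inter_add_ncard_diff_eq_ncard Q M (Set.toFinite Q)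
      have h5 := Set.ncard_union_le (Q \ M) (Subtype.val '' Q'')
      rw [hR]
      omega
    have hMem1 : ∀ z : V, z ∉ R → ∀ hz : z ∈ M, (⟨z, hz⟩ : ↥M) ∉ Q'' :=
      fun z hzR hz hin => hzR (Or.inr ⟨⟨z, hz⟩, hin, rfl⟩)
    have hMem2 : ∀ z : V, z ∉ R → z ∉ M → z ∉ Q :=
      fun z hzR hz hin => hzR (Or.inl ⟨hin, hz⟩)
    set σ : ℝ → ℝ := fun s => t + 1/2 + Real.arctan s / 4 with hσ
    have hσle : ∀ s1 s2 : ℝ, σ s1 ≤ σ s2 ↔ s1 ≤ s2 := by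
      intro s1 s2
      simp only [hσ]
      constructor
      · intro h
        have h' : Real.arctan s1 ≤ Real.arctan s2 := by linarith
        exact Real.arctan_strictMono.le_iff_le.1 h'
      · intro h
        have h' := Real.arctan_strictMono.le_iff_le.2 h
        linarith
    have hσrange : ∀ s : ℝ, t < σ s ∧ σ s < t + 1 := by
      intro s
      have h1 := Real.arctan_lt_pi_div_two s
      have h2 := Real.neg_pi_div_two_lt_arctan s
      have hpi := Real.pi_le_four
      simp only [hσ]
      constructor <;> linarith
    set L : ℝ → ℝ := fun s => if s ≤ t then s else s + 2 with hL
    set RR : ℝ → ℝ := fun s => if s < t then s else s + 2 with hRR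
    have hLR : ∀ s1 s2 : ℝ, L s1 ≤ RR s2 ↔ s1 ≤ s2 := by
      intro s1 s2
      simp only [hL, hRR]
      split_ifs with h1 h2 h2 <;> constructor <;> intro <;> linarith
    set ff : ↥Rᶜ → Set ℝ := fun v =>
      if hv : (v : V) ∈ M then
        Set.Icc (σ (c ⟨⟨(v : V), hv⟩, hMem1 (v : V) v.2 hv⟩))
                (σ (d ⟨⟨(v : V), hv⟩, hMem1 (v : V) v.2 hv⟩))
      else
        Set.Icc (L (a ⟨(v : V), hMem2 (v : V) v.2 hv⟩))
                (RR (b ⟨(v : V), hMem2 (v : V) v.2 hv⟩)) with hff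
    have hkey : ∀ s r : ↥Rᶜ, (s : V) ∈ M → (r : V) ∉ M →
        (G.Adj (s : V) (r : V) ↔ (ff s ∩ ff r).Nonempty) := by
      intro s r hs hr
      set x : ↥Qᶜ := ⟨(r : V), hMem2 (r : V) r.2 hr⟩ with hx
      set i : ↥(Q''ᶜ) := ⟨⟨(s : V), hs⟩, hMem1 (s : V) s.2 hs⟩ with hi
      have hffs : ff s = Set.Icc (σ (c i)) (σ (d i)) := by
        simp only [hff]; rw [dif_pos hs]
      have hffr : ff r = Set.Icc (L (a x)) (RR (b x)) := by
        simp only [hff]; rw [dif_neg hr]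
      rw [hffs, hffr]
      have hadjiff : G.Adj (s : V) (r : V) ↔ G.Adj w (r : V) :=
        hM (s : V) hs w hwM (r : V) hr
      by_cases hwx : G.Adj w (r : V)
      · have hxS : x ∈ S := by
          rw [hS]
          exact Finset.mem_insert.2 (Or.inr (Finset.mem_filter.2
            ⟨Finset.mem_univ _, hr, hwx⟩))
        obtain ⟨hta, htb⟩ := htmem x hxS
        refine iff_of_true (hadjiff.2 hwx) ?_
        refine ⟨σ (c i), ⟨le_refl _, (hσle _ _).2 (hcd _)⟩, ?_, ?_⟩
        · have hLx : L (a x) ≤ t := by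
            simp only [hL]; rw [if_pos hta]; exact hta
          exact hLx.trans (hσrange _).1.le
        · have hRx : t + 1 ≤ RR (b x) := by
            simp only [hRR]; rw [if_neg (not_lt.2 htb)]; linarith
          exact le_trans (hσrange _).2.le hRx
      · refine iff_of_false (fun hA => hwx (hadjiff.1 hA)) ?_
        have hnex : x ≠ ⟨w, hwQ⟩ := fun hh2 => hr (by
          rw [show (r : V) = w from congrArg (Subtype.val : ↥Qᶜ → V) hh2]
          exact hwM)
        have hdisj : ¬ (f x ∩ f ⟨w, hwQ⟩).Nonempty :=
          fun hnon => hwx (G.adj_symm ((hf2 x ⟨w, hwQ⟩ hnex).2 hnon))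
        obtain ⟨hwa, hwb⟩ := htmem ⟨w, hwQ⟩ (by rw [hS]; exact Finset.mem_insert_self _ _)
        have htx : ¬ (a x ≤ t ∧ t ≤ b x) := by
          intro hc
          exact hdisj ⟨t, by rw [hfab]; exact hc, by rw [hfab]; exact ⟨hwa, hwb⟩⟩
        rintro ⟨z, hzin⟩
        obtain ⟨hz12, hz34⟩ := hzin
        rw [Set.mem_Icc] at hz12 hz34
        obtain ⟨hz1, hz2⟩ := hz12
        obtain ⟨hz3, hz4⟩ := hz34
        rcases not_and_or.1 htx with hcase | hcase
        · have hax : t < a x := not_le.1 hcase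
          have hLx : L (a x) = a x + 2 := by
            simp only [hL]; rw [if_neg (not_le.2 hax)]
          have hσd := (hσrange (d i)).2
          rw [hLx] at hz3
          linarith
        · have hbx : b x < t := not_le.1 hcase
          have hRx : RR (b x) = b x := by
            simp only [hRR]; rw [if_pos hbx]
          have hσc := (hσrange (c i)).1
          rw [hRx] at hz4
          linarith
    have hRdel : IntervalDeletionSet G R := by
      refine ⟨ff, ?_, ?_⟩
      · intro v
        by_cases hv : (v : V) ∈ M
        · exact ⟨_, _, (hσle _ _).2 (hcd _), by simp only [hff]; rw [dif_pos hv]⟩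
        · exact ⟨_, _, (hLR _ _).2 (hab _), by simp only [hff]; rw [dif_neg hv]⟩
      · intro u v huv
        change G.Adj (u : V) (v : V) ↔ (ff u ∩ ff v).Nonempty
        by_cases hu : (u : V) ∈ M <;> by_cases hv : (v : V) ∈ M
        · set i : ↥(Q''ᶜ) := ⟨⟨(u : V), hu⟩, hMem1 (u : V) u.2 hu⟩ with hi
          set j : ↥(Q''ᶜ) := ⟨⟨(v : V), hv⟩, hMem1 (v : V) v.2 hv⟩ with hj
          have hffu : ff u = Set.Icc (σ (c i)) (σ (d i)) := by
            simp only [hff]; rw [dif_pos hu]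
          have hffv : ff v = Set.Icc (σ (c j)) (σ (d j)) := by
            simp only [hff]; rw [dif_pos hv]
          have hne2 : i ≠ j := fun hh2 => huv (Subtype.ext
            (show (u : V) = (v : V) from
              congrArg (fun z : ↥(Q''ᶜ) => ((z : ↥M) : V)) hh2))
          have h5 := hg2 i j hne2
          rw [hgab, hgab, aux_icc (hcd i) (hcd j)] at h5
          rw [hffu, hffv, aux_icc ((hσle _ _).2 (hcd i)) ((hσle _ _).2 (hcd j)),
            hσle, hσle]
          exact h5
        · exact hkey u v hu hv
        · rw [G.adj_comm, Set.inter_comm]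
          exact hkey v u hv hu
        · set i : ↥Qᶜ := ⟨(u : V), hMem2 (u : V) u.2 hu⟩ with hi
          set j : ↥Qᶜ := ⟨(v : V), hMem2 (v : V) v.2 hv⟩ with hj
          have hffu : ff u = Set.Icc (L (a i)) (RR (b i)) := by
            simp only [hff]; rw [dif_neg hu]
          have hffv : ff v = Set.Icc (L (a j)) (RR (b j)) := by
            simp only [hff]; rw [dif_neg hv]
          have hne2 : i ≠ j := fun hh2 => huv (Subtype.ext
            (show (u : V) = (v : V) from congrArg (Subtype.val : ↥Qᶜ → V) hh2))
          have h5 := hf2 i j hne2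
          rw [hfab, hfab, aux_icc (hab i) (hab j)] at h5
          rw [hffu, hffv, aux_icc ((hLR _ _).2 (hab i)) ((hLR _ _).2 (hab j)),
            hLR, hLR]
          exact h5
    exact absurd (hQ.2 R hRdel) (not_le.2 hRlt)
end

section
/- Let G be a finite prereduced graph, H a hole of G, and v any vertex of G. Then N_H[v] is consecutive in H: there is a cyclic ordering h₀, h₁, …, h_{m−1} of the vertices of H realizing the induced cycle (h_i adjacent to h_{i+1 mod m} and no other adjacencies within H) such that N_H[v] = {h₀, …, h_j} for some j, or N_H[v] = ∅. Moreover, either N_H[v] = H or |N_H[v]| < |H| − 7. -/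
set_option linter.unusedSectionVars false
set_option linter.unusedVariables false

section obstructions

variable {W : Type*} {G' : SimpleGraph W}

private lemma pigeon3 (P : Fin 3 → Prop) [DecidablePred P] :
    ∃ i j : Fin 3, i ≠ j ∧ (P i ↔ P j) := by
  by_cases h0 : P 0 <;> by_cases h1 : P 1 <;> by_cases h2 : P 2
  · exact ⟨0, 1, by decide, iff_of_true h0 h1⟩
  · exact ⟨0, 1, by decide, iff_of_true h0 h1⟩
  · exact ⟨0, 2, by decide, iff_of_true h0 h2⟩
  · exact ⟨1, 2, by decide, iff_of_false h1 h2⟩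
  · exact ⟨1, 2, by decide, iff_of_true h1 h2⟩
  · exact ⟨0, 2, by decide, iff_of_false h0 h2⟩
  · exact ⟨0, 1, by decide, iff_of_false h0 h1⟩
  · exact ⟨0, 1, by decide, iff_of_false h0 h1⟩

lemma claw_free (h : IsIntervalGraph G') (u : W) (x y : Fin 3 → W)
    (hux : ∀ i, G'.Adj u (x i)) (hxy : ∀ i, G'.Adj (x i) (y i))
    (huy : ∀ i, ¬ G'.Adj u (y i)) (huyne : ∀ i, u ≠ y i)
    (hxx : ∀ i j, i ≠ j → ¬ G'.Adj (x i) (x j))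
    (hxxne : ∀ i j, i ≠ j → x i ≠ x j) : False := by
  classical
  obtain ⟨f, hf, hiff⟩ := h
  choose A B hAB hfe using hf
  have pt : ∀ {w₁ w₂ : W}, G'.Adj w₁ w₂ →
      ∃ p, A w₁ ≤ p ∧ p ≤ B w₁ ∧ A w₂ ≤ p ∧ p ≤ B w₂ := by
    intro w₁ w₂ hadj
    obtain ⟨p, hp1, hp2⟩ := (hiff _ _ hadj.ne).1 hadj
    rw [hfe w₁] at hp1; rw [hfe w₂] at hp2
    exact ⟨p, hp1.1, hp1.2, hp2.1, hp2.2⟩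
  have side : ∀ i, B (y i) < A u ∨ B u < A (y i) := by
    intro i
    by_contra hc
    push_neg at hc
    refine huy i ((hiff u (y i) (huyne i)).2 ⟨max (A u) (A (y i)), ?_, ?_⟩) <;> rw [hfe]
    · exact ⟨le_max_left _ _, max_le (hAB u) hc.2⟩
    · exact ⟨le_max_right _ _, max_le hc.1 (hAB (y i))⟩
  obtain ⟨i, j, hij, hsame⟩ := pigeon3 (fun i => B (y i) < A u)
  obtain ⟨p, hp1, hp2, hp3, hp4⟩ := pt (hxy i)
  obtain ⟨q, hq1, hq2, hq3, hq4⟩ := pt (hxy j)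
  obtain ⟨p', hp'1, hp'2, hp'3, hp'4⟩ := pt (hux i)
  obtain ⟨q', hq'1, hq'2, hq'3, hq'4⟩ := pt (hux j)
  have hadjij : (f (x i) ∩ f (x j)).Nonempty → False := fun hne =>
    hxx i j hij ((hiff _ _ (hxxne i j hij)).2 hne)
  by_cases hside : B (y i) < A u
  · have hsj : B (y j) < A u := hsame.mp hside
    refine hadjij ⟨A u, ?_, ?_⟩ <;> rw [hfe]
    · exact ⟨le_trans hp1 (le_trans hp4 hside.le), le_trans hp'1 hp'4⟩
    · exact ⟨le_trans hq1 (le_trans hq4 hsj.le), le_trans hq'1 hq'4⟩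
  · have hsj : ¬ B (y j) < A u := fun hh => hside (hsame.mpr hh)
    have hri : B u < A (y i) := (side i).resolve_left hside
    have hrj : B u < A (y j) := (side j).resolve_left hsj
    refine hadjij ⟨B u, ?_, ?_⟩ <;> rw [hfe]
    · exact ⟨le_trans hp'3 hp'2, le_trans (le_trans hri.le hp3) hp2⟩
    · exact ⟨le_trans hq'3 hq'2, le_trans (le_trans hrj.le hq3) hq2⟩

lemma net_free (h : IsIntervalGraph G') (x y : Fin 3 → W)
    (hxx : ∀ i j, i ≠ j → G'.Adj (x i) (x j))
    (hxy : ∀ i, G'.Adj (x i) (y i))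
    (hxyn : ∀ i j, i ≠ j → ¬ G'.Adj (x i) (y j))
    (hxyne : ∀ i j, i ≠ j → x i ≠ y j) : False := by
  classical
  obtain ⟨f, hf, hiff⟩ := h
  choose A B hAB hfe using hf
  have pt : ∀ {w₁ w₂ : W}, G'.Adj w₁ w₂ →
      ∃ p, A w₁ ≤ p ∧ p ≤ B w₁ ∧ A w₂ ≤ p ∧ p ≤ B w₂ := by
    intro w₁ w₂ hadj
    obtain ⟨p, hp1, hp2⟩ := (hiff _ _ hadj.ne).1 hadj
    rw [hfe w₁] at hp1; rw [hfe w₂] at hp2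
    exact ⟨p, hp1.1, hp1.2, hp2.1, hp2.2⟩
  have lr : ∀ i j, A (x i) ≤ B (x j) := by
    intro i j
    by_cases hij : i = j
    · subst hij; exact hAB _
    · obtain ⟨p, hp1, hp2, hp3, hp4⟩ := pt (hxx i j hij)
      exact le_trans hp1 hp4
  set c := max (A (x 0)) (max (A (x 1)) (A (x 2))) with hc
  have hcmem : ∀ i, A (x i) ≤ c ∧ c ≤ B (x i) := by
    intro i
    constructor
    · fin_cases i
      · exact le_max_left _ _
      · exact le_trans (le_max_left _ _) (le_max_right _ _)
      · exact le_trans (le_max_right _ _) (le_max_right _ _)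
    · exact max_le (lr 0 i) (max_le (lr 1 i) (lr 2 i))
  have succ_ne : ∀ i : Fin 3, i + 1 ≠ i := by decide
  have side : ∀ i, B (y i) < c ∨ c < A (y i) := by
    intro i
    by_contra hcon
    push_neg at hcon
    refine hxyn (i+1) i (succ_ne i) ((hiff _ _ (hxyne (i+1) i (succ_ne i))).2 ⟨c, ?_, ?_⟩) <;> rw [hfe]
    · exact ⟨(hcmem (i+1)).1, (hcmem (i+1)).2⟩
    · exact ⟨hcon.2, hcon.1⟩
  obtain ⟨i, j, hij, hsame⟩ := pigeon3 (fun i => B (y i) < c)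
  obtain ⟨p, hp1, hp2, hp3, hp4⟩ := pt (hxy i)
  obtain ⟨q, hq1, hq2, hq3, hq4⟩ := pt (hxy j)
  by_cases hside : B (y i) < c
  · have hsj : B (y j) < c := hsame.mp hside
    by_cases hpq : q ≤ B (y i)
    · -- B (y i) ∈ f (x j) ∩ f (y i)
      refine hxyn j i hij.symm ((hiff _ _ (hxyne j i hij.symm)).2 ⟨B (y i), ?_, ?_⟩) <;> rw [hfe]
      · exact ⟨le_trans hq1 hpq, le_trans hside.le (hcmem j).2⟩
      · exact ⟨le_trans hp3 hp4, le_refl _⟩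
    · push_neg at hpq
      -- q ∈ f (x i) ∩ f (y j)
      refine hxyn i j hij ((hiff _ _ (hxyne i j hij)).2 ⟨q, ?_, ?_⟩) <;> rw [hfe]
      · exact ⟨le_trans hp1 (le_trans hp4 hpq.le), le_trans hq4 (le_trans hsj.le (hcmem i).2)⟩
      · exact ⟨hq3, hq4⟩
  · have hsj : ¬ B (y j) < c := fun hh => hside (hsame.mpr hh)
    have hri : c < A (y i) := (side i).resolve_left hside
    have hrj : c < A (y j) := (side j).resolve_left hsj
    by_cases hpq : A (y i) ≤ q
    · -- A (y i) ∈ f (x j) ∩ f (y i)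
      refine hxyn j i hij.symm ((hiff _ _ (hxyne j i hij.symm)).2 ⟨A (y i), ?_, ?_⟩) <;> rw [hfe]
      · exact ⟨le_trans (hcmem j).1 hri.le, le_trans hpq hq2⟩
      · exact ⟨le_refl _, le_trans hp3 hp4⟩
    · push_neg at hpq
      -- q ∈ f (x i) ∩ f (y j)
      refine hxyn i j hij ((hiff _ _ (hxyne i j hij)).2 ⟨q, ?_, ?_⟩) <;> rw [hfe]
      · exact ⟨le_trans (hcmem i).1 (le_trans hrj.le hq3), le_trans (le_trans hpq.le hp3) hp2⟩
      · exact ⟨hq3, hq4⟩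

lemma cycle_free (h : IsIntervalGraph G') (n : ℕ) (hn : 2 ≤ n) (v : W) (x : ℕ → W)
    (h0 : G'.Adj v (x 0)) (hn' : G'.Adj v (x n))
    (hmid : ∀ i, 0 < i → i < n → ¬ G'.Adj v (x i) ∧ v ≠ x i)
    (hpath : ∀ i, i < n → G'.Adj (x i) (x (i+1)))
    (hnadj : ¬ G'.Adj (x 0) (x n)) (hne : x 0 ≠ x n) : False := by
  classical
  obtain ⟨f, hf, hiff⟩ := h
  choose A B hAB hfe using hf
  have pt : ∀ {w₁ w₂ : W}, G'.Adj w₁ w₂ →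
      ∃ p, A w₁ ≤ p ∧ p ≤ B w₁ ∧ A w₂ ≤ p ∧ p ≤ B w₂ := by
    intro w₁ w₂ hadj
    obtain ⟨p, hp1, hp2⟩ := (hiff _ _ hadj.ne).1 hadj
    rw [hfe w₁] at hp1; rw [hfe w₂] at hp2
    exact ⟨p, hp1.1, hp1.2, hp2.1, hp2.2⟩
  have side : ∀ i, 0 < i → i < n → B (x i) < A v ∨ B v < A (x i) := by
    intro i hi1 hi2
    by_contra hcon
    push_neg at hcon
    refine (hmid i hi1 hi2).1 ((hiff _ _ (hmid i hi1 hi2).2).2 ⟨max (A v) (A (x i)), ?_, ?_⟩) <;> rw [hfe]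
    · exact ⟨le_max_left _ _, max_le (hAB v) hcon.2⟩
    · exact ⟨le_max_right _ _, max_le hcon.1 (hAB (x i))⟩
  have chain : ∀ i, 1 ≤ i → i < n → (B (x i) < A v ↔ B (x 1) < A v) := by
    intro i
    induction i with
    | zero => omega
    | succ k ih =>
      intro _ hkn
      rcases Nat.lt_or_ge 1 (k+1) with hk1 | hk1
      · have hk : 1 ≤ k := by omega
        have hkn' : k < n := by omega
        have ihk := ih hk hkn'
        obtain ⟨p, hp1, hp2, hp3, hp4⟩ := pt (hpath k hkn')
        rcases side k hk hkn' with hL | hR <;> rcases side (k+1) (by omega) hkn with hL' | hR'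
        · exact iff_of_true hL' (ihk.mp hL)
        · exfalso; linarith [hAB v]
        · exfalso; linarith [hAB v]
        · constructor
          · intro hh; exfalso; linarith [hAB (x (k+1)), hAB v]
          · intro hh; exfalso; have := ihk.mpr hh; linarith [hAB (x k), hAB v]
      · have : k + 1 = 1 := by omega
        rw [this]
  have hn1 : n - 1 + 1 = n := by omega
  obtain ⟨p0, hp01, hp02, hp03, hp04⟩ := pt (hpath 0 (by omega))
  have hlast : G'.Adj (x (n-1)) (x n) := by
    have := hpath (n-1) (by omega); rwa [hn1] at this
  obtain ⟨pn, hpn1, hpn2, hpn3, hpn4⟩ := pt hlast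
  obtain ⟨q0, hq01, hq02, hq03, hq04⟩ := pt h0
  obtain ⟨qn, hqn1, hqn2, hqn3, hqn4⟩ := pt hn'
  have contra : (f (x 0) ∩ f (x n)).Nonempty → False := fun hne' =>
    hnadj ((hiff _ _ hne).2 hne')
  rcases side 1 (by omega) (by omega) with h1 | h1
  · have hL : B (x (n-1)) < A v := (chain (n-1) (by omega) (by omega)).mpr h1
    refine contra ⟨A v, ?_, ?_⟩ <;> rw [hfe]
    · exact ⟨le_trans hp01 (le_trans hp04 h1.le), le_trans hq01 hq04⟩
    · exact ⟨le_trans hpn3 (le_trans hpn2 hL.le), le_trans hqn1 hqn4⟩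
  · have hR : B v < A (x (n-1)) := by
      rcases side (n-1) (by omega) (by omega) with hh | hh
      · exfalso
        have h1' : B (x 1) < A v := by
          by_contra hc
          exact hc ((chain (n-1) (by omega) (by omega)).mp hh)
        linarith [hAB (x 1), hAB v]
      · exact hh
    refine contra ⟨B v, ?_, ?_⟩ <;> rw [hfe]
    · exact ⟨le_trans hq03 hq02, le_trans (le_trans h1.le hp03) hp02⟩
    · exact ⟨le_trans hqn3 hqn2, le_trans (le_trans hR.le hpn1) hpn4⟩

lemma prereduced_induce_interval {V : Type*} [Fintype V] {G : SimpleGraph V} (hG : Prereduced G)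
    (X : Set V) (hX : X.ncard ≤ 10) : IsIntervalGraph (G.induce X) := by
  classical
  by_contra hni
  have hex : ∃ n, ∃ Y : Set V, Y ⊆ X ∧ Y.ncard = n ∧ ¬ IsIntervalGraph (G.induce Y) :=
    ⟨X.ncard, X, subset_rfl, rfl, hni⟩
  obtain ⟨Y, hYX, hYcard, hYni⟩ := Nat.find_spec hex
  refine hG Y ?_ ⟨hYni, ?_⟩
  · exact le_trans (Set.ncard_le_ncard hYX X.toFinite) hX
  · intro Z hZ
    by_contra hZni
    have hlt : Z.ncard < Y.ncard := Set.ncard_lt_ncard hZ Y.toFinite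
    rw [hYcard] at hlt
    exact Nat.find_min hex hlt ⟨Z, hZ.subset.trans hYX, rfl, hZni⟩

end obstructions


section wrappers

variable {W : Type*} {G' : SimpleGraph W}

lemma claw_free' (h : IsIntervalGraph G') (u x0 x1 x2 y0 y1 y2 : W)
    (a0 : G'.Adj u x0) (a1 : G'.Adj u x1) (a2 : G'.Adj u x2)
    (b0 : G'.Adj x0 y0) (b1 : G'.Adj x1 y1) (b2 : G'.Adj x2 y2)
    (c0 : ¬ G'.Adj u y0) (c1 : ¬ G'.Adj u y1) (c2 : ¬ G'.Adj u y2)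
    (d0 : u ≠ y0) (d1 : u ≠ y1) (d2 : u ≠ y2)
    (e01 : ¬ G'.Adj x0 x1) (e02 : ¬ G'.Adj x0 x2) (e12 : ¬ G'.Adj x1 x2)
    (g01 : x0 ≠ x1) (g02 : x0 ≠ x2) (g12 : x1 ≠ x2) : False := by
  refine claw_free h u ![x0, x1, x2] ![y0, y1, y2] ?_ ?_ ?_ ?_ ?_ ?_
  · intro i; fin_cases i <;> assumption
  · intro i; fin_cases i <;> assumption
  · intro i; fin_cases i <;> assumption
  · intro i; fin_cases i <;> assumption
  · intro i j hij; fin_cases i <;> fin_cases j <;>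
      first
        | exact absurd rfl hij
        | assumption
        | exact fun hh => e01 hh.symm
        | exact fun hh => e02 hh.symm
        | exact fun hh => e12 hh.symm
  · intro i j hij; fin_cases i <;> fin_cases j <;>
      first
        | exact absurd rfl hij
        | assumption
        | exact g01.symm
        | exact g02.symm
        | exact g12.symm

lemma net_free' (h : IsIntervalGraph G') (x0 x1 x2 y0 y1 y2 : W)
    (t01 : G'.Adj x0 x1) (t02 : G'.Adj x0 x2) (t12 : G'.Adj x1 x2)
    (b0 : G'.Adj x0 y0) (b1 : G'.Adj x1 y1) (b2 : G'.Adj x2 y2)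
    (n01 : ¬ G'.Adj x0 y1) (n02 : ¬ G'.Adj x0 y2)
    (n10 : ¬ G'.Adj x1 y0) (n12 : ¬ G'.Adj x1 y2)
    (n20 : ¬ G'.Adj x2 y0) (n21 : ¬ G'.Adj x2 y1)
    (m01 : x0 ≠ y1) (m02 : x0 ≠ y2) (m10 : x1 ≠ y0) (m12 : x1 ≠ y2)
    (m20 : x2 ≠ y0) (m21 : x2 ≠ y1) : False := by
  refine net_free h ![x0, x1, x2] ![y0, y1, y2] ?_ ?_ ?_ ?_
  · intro i j hij; fin_cases i <;> fin_cases j <;>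
      first
        | exact absurd rfl hij
        | assumption
        | exact t01.symm
        | exact t02.symm
        | exact t12.symm
  · intro i; fin_cases i <;> assumption
  · intro i j hij; fin_cases i <;> fin_cases j <;>
      first
        | exact absurd rfl hij
        | assumption
  · intro i j hij; fin_cases i <;> fin_cases j <;>
      first
        | exact absurd rfl hij
        | assumption

end wrappers

section arith

lemma castEq {m : ℕ} {a b : ℕ} (ha : a < m) (hb : b < m) :
    ((a : ZMod m) = (b : ZMod m)) ↔ a = b := by
  haveI : NeZero m := ⟨by omega⟩
  constructor
  · intro h
    have h1 := ZMod.val_cast_of_lt ha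
    have h2 := ZMod.val_cast_of_lt hb
    rw [h] at h1; omega
  · intro h; rw [h]

lemma offEq {m : ℕ} (d : ZMod m) {a b : ℕ} (ha : a < m) (hb : b < m) :
    (d + (a : ZMod m) = d + (b : ZMod m)) ↔ a = b := by
  rw [add_right_inj]; exact castEq ha hb

lemma castSucc {m : ℕ} (a : ℕ) : ((a : ZMod m) + 1) = ((a + 1 : ℕ) : ZMod m) := by
  push_cast; ring

lemma adjOff {V : Type*} {G : SimpleGraph V} {m : ℕ} {f : ZMod m → V}
    (hadj : ∀ i j : ZMod m, G.Adj (f i) (f j) ↔ (j = i + 1 ∨ i = j + 1))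
    (d : ZMod m) {a b : ℕ} (ha : a + 1 < m) (hb : b + 1 < m) :
    G.Adj (f (d + (a : ZMod m))) (f (d + (b : ZMod m))) ↔ (b = a + 1 ∨ a = b + 1) := by
  rw [hadj]
  rw [add_assoc, add_assoc, castSucc, castSucc]
  rw [offEq d (by omega) ha, offEq d (by omega) hb]

end arith

section holes

variable {V : Type*} [Fintype V] {G : SimpleGraph V} {m : ℕ} {f : ZMod m → V} {v : V}

lemma ncard_le_seven {α : Type*} (a b c d e g h : α) :
    ({a, b, c, d, e, g, h} : Set α).ncard ≤ 7 := by
  have h1 : ({a, b, c, d, e, g, h} : Set α).ncard ≤ ({b, c, d, e, g, h} : Set α).ncard + 1 :=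
    Set.ncard_insert_le _ _
  have h2 : ({b, c, d, e, g, h} : Set α).ncard ≤ ({c, d, e, g, h} : Set α).ncard + 1 :=
    Set.ncard_insert_le _ _
  have h3 : ({c, d, e, g, h} : Set α).ncard ≤ ({d, e, g, h} : Set α).ncard + 1 :=
    Set.ncard_insert_le _ _
  have h4 : ({d, e, g, h} : Set α).ncard ≤ ({e, g, h} : Set α).ncard + 1 :=
    Set.ncard_insert_le _ _
  have h5 : ({e, g, h} : Set α).ncard ≤ ({g, h} : Set α).ncard + 1 :=
    Set.ncard_insert_le _ _
  have h6 : ({g, h} : Set α).ncard ≤ ({h} : Set α).ncard + 1 :=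
    Set.ncard_insert_le _ _
  have h7 : ({h} : Set α).ncard = 1 := Set.ncard_singleton _
  omega

lemma gap_big (hG : Prereduced G) (hm : 11 ≤ m)
    (hinj : Function.Injective f)
    (hadj : ∀ i j : ZMod m, G.Adj (f i) (f j) ↔ (j = i + 1 ∨ i = j + 1))
    (hv : ∀ i, v ≠ f i)
    (d : ZMod m) (e : ℕ) (he2 : 2 ≤ e) (he8 : e ≤ 8)
    (hd : G.Adj v (f d)) (hde : G.Adj v (f (d + (e : ZMod m))))
    (hgap : ∀ j : ℕ, 1 ≤ j → j < e → ¬ G.Adj v (f (d + (j : ZMod m)))) : False := by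
  classical
  set X : Set V := insert v ((fun j : ℕ => f (d + (j : ZMod m))) '' Set.Iic e) with hXdef
  have hmem : ∀ j : ℕ, j ≤ e → f (d + (j : ZMod m)) ∈ X := fun j hj =>
    Set.mem_insert_of_mem _ ⟨j, Set.mem_Iic.mpr hj, rfl⟩
  have hvX : v ∈ X := Set.mem_insert _ _
  have hcard : X.ncard ≤ 10 := by
    have h1 : X.ncard ≤ ((fun j : ℕ => f (d + (j : ZMod m))) '' Set.Iic e).ncard + 1 :=
      Set.ncard_insert_le _ _
    have h2 : ((fun j : ℕ => f (d + (j : ZMod m))) '' Set.Iic e).ncard ≤ (Set.Iic e).ncard :=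
      Set.ncard_image_le (Set.finite_Iic e)
    have h3 : (Set.Iic e).ncard = e + 1 := by
      simp [← Nat.card_coe_set_eq, Nat.card_eq_fintype_card]
    omega
  have hint := prereduced_induce_interval hG X hcard
  have h0eq : d + ((0 : ℕ) : ZMod m) = d := by push_cast; ring
  let xv : ℕ → ↥X := fun j => if hj : j ≤ e then ⟨f (d + (j : ZMod m)), hmem j hj⟩ else ⟨v, hvX⟩
  have hxval : ∀ j, j ≤ e → (xv j : V) = f (d + (j : ZMod m)) := by
    intro j hj; simp only [xv, dif_pos hj]
  refine cycle_free hint e he2 ⟨v, hvX⟩ xv ?_ ?_ ?_ ?_ ?_ ?_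
  · show G.Adj v (xv 0 : V)
    rw [hxval 0 (by omega), h0eq]; exact hd
  · show G.Adj v (xv e : V)
    rw [hxval e le_rfl]; exact hde
  · intro i hi1 hi2
    constructor
    · show ¬ G.Adj v (xv i : V)
      rw [hxval i (by omega)]; exact hgap i (by omega) (by omega)
    · intro hh
      have := congrArg Subtype.val hh
      rw [hxval i (by omega)] at this
      exact hv _ this
  · intro i hi
    show G.Adj (xv i : V) (xv (i+1) : V)
    rw [hxval i (by omega), hxval (i+1) (by omega)]
    exact (adjOff hadj d (by omega) (by omega)).2 (Or.inl rfl)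
  · show ¬ G.Adj (xv 0 : V) (xv e : V)
    rw [hxval 0 (by omega), hxval e le_rfl]
    intro hh
    rcases (adjOff hadj d (show 0 + 1 < m by omega) (show e + 1 < m by omega)).1 hh with h' | h' <;> omega
  · intro hh
    have h2 := congrArg Subtype.val hh
    rw [hxval 0 (by omega), hxval e le_rfl] at h2
    have h3 := hinj h2
    rw [offEq d (show (0:ℕ) < m by omega) (show e < m by omega)] at h3
    omega

lemma exists_gap (hG : Prereduced G) (hm : 11 ≤ m)
    (hinj : Function.Injective f)
    (hadj : ∀ i j : ZMod m, G.Adj (f i) (f j) ↔ (j = i + 1 ∨ i = j + 1))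
    (hv : ∀ i, v ≠ f i)
    (d : ZMod m) (hd : G.Adj v (f d)) (hd1 : ¬ G.Adj v (f (d + 1))) :
    ∃ e : ℕ, 9 ≤ e ∧ e ≤ m ∧ (∀ j : ℕ, 1 ≤ j → j < e → ¬ G.Adj v (f (d + (j : ZMod m)))) ∧
      G.Adj v (f (d + (e : ZMod m))) := by
  classical
  haveI : NeZero m := ⟨by omega⟩
  have hwit : (2 ≤ m ∧ G.Adj v (f (d + (m : ZMod m)))) := by
    constructor
    · omega
    · rw [ZMod.natCast_self, add_zero]; exact hd
  have hex : ∃ l : ℕ, 2 ≤ l ∧ G.Adj v (f (d + (l : ZMod m))) := ⟨m, hwit⟩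
  obtain ⟨he2, hadje⟩ := Nat.find_spec hex
  have hgap : ∀ j : ℕ, 1 ≤ j → j < Nat.find hex → ¬ G.Adj v (f (d + (j : ZMod m))) := by
    intro j h1 h2
    by_cases hj1 : j = 1
    · subst hj1
      rw [show ((1:ℕ) : ZMod m) = 1 from Nat.cast_one]
      exact hd1
    · intro hadj'
      exact Nat.find_min hex h2 ⟨by omega, hadj'⟩
  have he9 : 9 ≤ Nat.find hex := by
    by_contra hlt
    push_neg at hlt
    exact gap_big hG hm hinj hadj hv d (Nat.find hex) he2 (by omega) hd hadje hgap
  exact ⟨Nat.find hex, he9, Nat.find_min' hex hwit, hgap, hadje⟩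

lemma gap_le (hm : 11 ≤ m)
    (d₁ d₂ : ZMod m) (hne : d₁ ≠ d₂)
    (hd₁ : G.Adj v (f d₁)) (hd₁n : ¬ G.Adj v (f (d₁ + 1)))
    (hd₂ : G.Adj v (f d₂)) (hd₂n : ¬ G.Adj v (f (d₂ + 1)))
    (e₁ : ℕ) (he₁1 : 1 ≤ e₁)
    (hgap1 : ∀ j : ℕ, 1 ≤ j → j < e₁ → ¬ G.Adj v (f (d₁ + (j : ZMod m)))) :
    e₁ ≤ m - 2 := by
  haveI : NeZero m := ⟨by omega⟩
  set k := (d₂ - d₁).val with hk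
  have hdk : d₁ + (k : ZMod m) = d₂ := by
    rw [hk, ZMod.natCast_val, ZMod.cast_id]; ring
  have hklt : k < m := ZMod.val_lt _
  have hk0 : k ≠ 0 := by
    intro h
    apply hne
    rw [h] at hdk
    push_cast at hdk
    rw [add_zero] at hdk
    exact hdk
  have hk1 : k ≠ 1 := by
    intro h
    rw [h] at hdk
    push_cast at hdk
    rw [← hdk] at hd₂
    exact hd₁n hd₂
  have hek : e₁ ≤ k := by
    by_contra h
    push_neg at h
    exact (hgap1 k (by omega) h) (hdk ▸ hd₂)
  by_contra hcon
  push_neg at hcon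
  have hkm : k = m - 1 := by omega
  have hstep : d₂ + 1 = d₁ := by
    rw [← hdk, hkm, add_assoc, castSucc, show m - 1 + 1 = m by omega, ZMod.natCast_self, add_zero]
  rw [hstep] at hd₂n
  exact hd₂n hd₁

end holes

section subs

variable {V : Type*} [Fintype V] {G : SimpleGraph V} {m : ℕ} {f : ZMod m → V} {v : V}

lemma ncard_le_six {α : Type*} (a b c d e g : α) :
    ({a, b, c, d, e, g} : Set α).ncard ≤ 6 := by
  have h2 : ({a, b, c, d, e, g} : Set α).ncard ≤ ({b, c, d, e, g} : Set α).ncard + 1 :=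
    Set.ncard_insert_le _ _
  have h3 : ({b, c, d, e, g} : Set α).ncard ≤ ({c, d, e, g} : Set α).ncard + 1 :=
    Set.ncard_insert_le _ _
  have h4 : ({c, d, e, g} : Set α).ncard ≤ ({d, e, g} : Set α).ncard + 1 :=
    Set.ncard_insert_le _ _
  have h5 : ({d, e, g} : Set α).ncard ≤ ({e, g} : Set α).ncard + 1 :=
    Set.ncard_insert_le _ _
  have h6 : ({e, g} : Set α).ncard ≤ ({g} : Set α).ncard + 1 :=
    Set.ncard_insert_le _ _
  have h7 : ({g} : Set α).ncard = 1 := Set.ncard_singleton _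
  omega

lemma subA (hG : Prereduced G) (hm : 11 ≤ m)
    (hinj : Function.Injective f)
    (hadj : ∀ i j : ZMod m, G.Adj (f i) (f j) ↔ (j = i + 1 ∨ i = j + 1))
    (hv : ∀ i, v ≠ f i)
    (d₁ d₂ : ZMod m) (e₁ : ℕ)
    (hne : d₁ ≠ d₂)
    (hd₁ : G.Adj v (f d₁)) (hd₁n : ¬ G.Adj v (f (d₁ + 1)))
    (hd₂ : G.Adj v (f d₂)) (hd₂n : ¬ G.Adj v (f (d₂ + 1)))
    (he₁9 : 9 ≤ e₁) (he₁m : e₁ ≤ m - 2)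
    (hgap1 : ∀ j : ℕ, 1 ≤ j → j < e₁ → ¬ G.Adj v (f (d₁ + (j : ZMod m))))
    (hg1end : G.Adj v (f (d₁ + (e₁ : ZMod m))))
    (hA1 : d₂ ≠ d₁ + (e₁ : ZMod m))
    (hA2 : d₂ ≠ d₁ + ((e₁ + 1 : ℕ) : ZMod m)) : False := by
  classical
  haveI : NeZero m := ⟨by omega⟩
  have h0eq : d₁ + ((0 : ℕ) : ZMod m) = d₁ := by push_cast; ring
  -- vertices
  set x1 : V := f (d₁ + ((0:ℕ) : ZMod m)) with hx1
  set x2 : V := f d₂ with hx2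
  set x3 : V := f (d₁ + ((e₁:ℕ) : ZMod m)) with hx3
  set y1 : V := f (d₁ + ((1:ℕ) : ZMod m)) with hy1
  set y2 : V := f (d₂ + 1) with hy2
  set y3 : V := f (d₁ + ((e₁ - 1 : ℕ) : ZMod m)) with hy3
  have hux1 : G.Adj v x1 := by rw [hx1, h0eq]; exact hd₁
  have hux2 : G.Adj v x2 := hd₂
  have hux3 : G.Adj v x3 := hg1end
  have hxy1 : G.Adj x1 y1 := (adjOff hadj d₁ (by omega) (by omega)).2 (Or.inl rfl)
  have hxy2 : G.Adj x2 y2 := (hadj _ _).2 (Or.inl rfl)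
  have hxy3 : G.Adj x3 y3 := (adjOff hadj d₁ (by omega) (by omega)).2 (Or.inr (by omega))
  have huy1 : ¬ G.Adj v y1 := by
    rw [hy1, show ((1:ℕ) : ZMod m) = 1 from Nat.cast_one]
    exact hd₁n
  have huy2 : ¬ G.Adj v y2 := hd₂n
  have huy3 : ¬ G.Adj v y3 := hgap1 (e₁ - 1) (by omega) (by omega)
  have he12 : ¬ G.Adj x1 x2 := by
    rw [hx1, h0eq, hx2, hadj]
    rintro (h | h)
    · exact hd₁n (h ▸ hd₂)
    · apply hd₂n
      rw [hy2, ← h]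
      exact hd₁
  have he13 : ¬ G.Adj x1 x3 := by
    intro h
    rcases (adjOff hadj d₁ (show 0+1 < m by omega) (show e₁+1 < m by omega)).1 h with h' | h' <;> omega
  have he23 : ¬ G.Adj x2 x3 := by
    rw [hx2, hx3, hadj]
    rintro (h | h)
    · have hkey : d₁ + ((e₁ - 1 : ℕ) : ZMod m) = d₂ := by
        apply add_right_cancel (b := (1 : ZMod m))
        rw [add_assoc, castSucc, show e₁ - 1 + 1 = e₁ by omega]
        exact h
      exact hgap1 (e₁ - 1) (by omega) (by omega) (hkey ▸ hd₂)
    · apply hA2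
      rw [h, add_assoc, castSucc]
  have hg12 : x1 ≠ x2 := by
    intro h
    rw [hx1, h0eq, hx2] at h
    exact hne (hinj h)
  have hg13 : x1 ≠ x3 := by
    intro h
    have := hinj h
    rw [offEq d₁ (by omega) (by omega)] at this
    omega
  have hg23 : x2 ≠ x3 := fun h => hA1 (hinj h)
  -- the set
  set X : Set V := {v, x1, x2, x3, y1, y2, y3} with hX
  have hcard : X.ncard ≤ 10 := le_trans (ncard_le_seven _ _ _ _ _ _ _) (by omega)
  have hint := prereduced_induce_interval hG X hcard
  exact claw_free' hint
    ⟨v, by simp [hX]⟩ ⟨x1, by simp [hX]⟩ ⟨x2, by simp [hX]⟩ ⟨x3, by simp [hX]⟩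
    ⟨y1, by simp [hX]⟩ ⟨y2, by simp [hX]⟩ ⟨y3, by simp [hX]⟩
    hux1 hux2 hux3 hxy1 hxy2 hxy3 huy1 huy2 huy3
    (fun h => hv _ (congrArg Subtype.val h)) (fun h => hv _ (congrArg Subtype.val h))
    (fun h => hv _ (congrArg Subtype.val h))
    he12 he13 he23
    (fun h => hg12 (congrArg Subtype.val h)) (fun h => hg13 (congrArg Subtype.val h))
    (fun h => hg23 (congrArg Subtype.val h))

lemma subB (hG : Prereduced G) (hm : 11 ≤ m)
    (hinj : Function.Injective f)
    (hadj : ∀ i j : ZMod m, G.Adj (f i) (f j) ↔ (j = i + 1 ∨ i = j + 1))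
    (hv : ∀ i, v ≠ f i)
    (d₁ d₂ : ZMod m) (e₁ e₂ : ℕ)
    (hd₁ : G.Adj v (f d₁)) (hd₁n : ¬ G.Adj v (f (d₁ + 1)))
    (hd₂ : G.Adj v (f d₂))
    (he₁9 : 9 ≤ e₁)
    (hgap1 : ∀ j : ℕ, 1 ≤ j → j < e₁ → ¬ G.Adj v (f (d₁ + (j : ZMod m))))
    (he₂9 : 9 ≤ e₂) (he₂m : e₂ ≤ m - 2)
    (hgap2 : ∀ j : ℕ, 1 ≤ j → j < e₂ → ¬ G.Adj v (f (d₂ + (j : ZMod m))))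
    (heq : d₁ = d₂ + ((e₂:ℕ) : ZMod m)) : False := by
  classical
  haveI : NeZero m := ⟨by omega⟩
  have h0eq : d₂ + ((0 : ℕ) : ZMod m) = d₂ := by push_cast; ring
  have hdkm : d₁ + ((m - e₂ : ℕ) : ZMod m) = d₂ := by
    rw [heq, add_assoc, ← Nat.cast_add, show e₂ + (m - e₂) = m by omega,
      ZMod.natCast_self, add_zero]
  have hsum : e₁ + e₂ ≤ m := by
    by_contra hcon
    push_neg at hcon
    exact hgap1 (m - e₂) (by omega) (by omega) (hdkm ▸ hd₂)
  have hoff : e₂ + 3 < m := by omega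
  -- conversions
  have hp1 : d₂ + ((e₂ + 1 : ℕ) : ZMod m) = d₁ + 1 := by
    rw [heq, ← castSucc, ← add_assoc]
  have hp2 : d₂ + ((e₂ + 2 : ℕ) : ZMod m) = d₁ + ((2:ℕ) : ZMod m) := by
    rw [heq]; push_cast; ring
  have hd₁' : G.Adj v (f (d₂ + ((e₂:ℕ) : ZMod m))) := by rw [← heq]; exact hd₁
  have hnp1 : ¬ G.Adj v (f (d₂ + ((e₂ + 1 : ℕ) : ZMod m))) := by rw [hp1]; exact hd₁n
  have hnp2 : ¬ G.Adj v (f (d₂ + ((e₂ + 2 : ℕ) : ZMod m))) := by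
    rw [hp2]; exact hgap1 2 (by omega) (by omega)
  set u : V := f (d₂ + ((e₂:ℕ) : ZMod m)) with hu
  set x0 : V := f (d₂ + ((e₂ + 1 : ℕ) : ZMod m)) with hx0
  set x1 : V := f (d₂ + ((e₂ - 1 : ℕ) : ZMod m)) with hx1
  set y0 : V := f (d₂ + ((e₂ + 2 : ℕ) : ZMod m)) with hy0
  set y1 : V := f (d₂ + ((e₂ - 2 : ℕ) : ZMod m)) with hy1
  set y2 : V := f (d₂ + ((0:ℕ) : ZMod m)) with hy2
  have a0 : G.Adj u x0 := (adjOff hadj d₂ (by omega) (by omega)).2 (Or.inl rfl)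
  have a1 : G.Adj u x1 := (adjOff hadj d₂ (by omega) (by omega)).2 (Or.inr (by omega))
  have a2 : G.Adj u v := hd₁'.symm
  have b0 : G.Adj x0 y0 := (adjOff hadj d₂ (by omega) (by omega)).2 (Or.inl (by omega))
  have b1 : G.Adj x1 y1 := (adjOff hadj d₂ (by omega) (by omega)).2 (Or.inr (by omega))
  have b2 : G.Adj v y2 := by rw [hy2, h0eq]; exact hd₂
  have c0 : ¬ G.Adj u y0 := by
    intro h
    rcases (adjOff hadj d₂ (by omega) (by omega)).1 h with h' | h' <;> omega
  have c1 : ¬ G.Adj u y1 := by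
    intro h
    rcases (adjOff hadj d₂ (by omega) (by omega)).1 h with h' | h' <;> omega
  have c2 : ¬ G.Adj u y2 := by
    intro h
    rcases (adjOff hadj d₂ (by omega) (by omega)).1 h with h' | h' <;> omega
  have d0 : u ≠ y0 := by
    intro h; have := hinj h; rw [offEq d₂ (by omega) (by omega)] at this; omega
  have d1 : u ≠ y1 := by
    intro h; have := hinj h; rw [offEq d₂ (by omega) (by omega)] at this; omega
  have d2 : u ≠ y2 := by
    intro h; have := hinj h; rw [offEq d₂ (by omega) (by omega)] at this; omega
  have e01 : ¬ G.Adj x0 x1 := by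
    intro h
    rcases (adjOff hadj d₂ (by omega) (by omega)).1 h with h' | h' <;> omega
  have e02 : ¬ G.Adj x0 v := fun h => hnp1 h.symm
  have e12 : ¬ G.Adj x1 v := fun h => hgap2 (e₂ - 1) (by omega) (by omega) h.symm
  have g01 : x0 ≠ x1 := by
    intro h; have := hinj h; rw [offEq d₂ (by omega) (by omega)] at this; omega
  have g02 : x0 ≠ v := fun h => hv _ h.symm
  have g12 : x1 ≠ v := fun h => hv _ h.symm
  set X : Set V := {u, x0, x1, v, y0, y1, y2} with hX
  have hcard : X.ncard ≤ 10 := le_trans (ncard_le_seven _ _ _ _ _ _ _) (by omega)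
  have hint := prereduced_induce_interval hG X hcard
  exact claw_free' hint
    ⟨u, by simp [hX]⟩ ⟨x0, by simp [hX]⟩ ⟨x1, by simp [hX]⟩ ⟨v, by simp [hX]⟩
    ⟨y0, by simp [hX]⟩ ⟨y1, by simp [hX]⟩ ⟨y2, by simp [hX]⟩
    a0 a1 a2 b0 b1 b2 c0 c1 c2
    (fun h => d0 (congrArg Subtype.val h)) (fun h => d1 (congrArg Subtype.val h))
    (fun h => d2 (congrArg Subtype.val h))
    e01 e02 e12
    (fun h => g01 (congrArg Subtype.val h)) (fun h => g02 (congrArg Subtype.val h))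
    (fun h => g12 (congrArg Subtype.val h))

lemma subC (hG : Prereduced G) (hm : 11 ≤ m)
    (hinj : Function.Injective f)
    (hadj : ∀ i j : ZMod m, G.Adj (f i) (f j) ↔ (j = i + 1 ∨ i = j + 1))
    (hv : ∀ i, v ≠ f i)
    (d₁ d₂ : ZMod m) (e₁ e₂ : ℕ)
    (hd₁ : G.Adj v (f d₁)) (hd₁n : ¬ G.Adj v (f (d₁ + 1)))
    (hd₂ : G.Adj v (f d₂))
    (he₁9 : 9 ≤ e₁) (he₁m : e₁ ≤ m - 2)
    (he₂9 : 9 ≤ e₂) (he₂m : e₂ ≤ m - 2)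
    (hgap2 : ∀ j : ℕ, 1 ≤ j → j < e₂ → ¬ G.Adj v (f (d₂ + (j : ZMod m))))
    (hg2end : G.Adj v (f (d₂ + ((e₂:ℕ) : ZMod m))))
    (hc₁ : d₂ = d₁ + ((e₁ + 1 : ℕ) : ZMod m))
    (hc₂ : d₁ = d₂ + ((e₂ + 1 : ℕ) : ZMod m)) : False := by
  classical
  haveI : NeZero m := ⟨by omega⟩
  have h0eq : d₂ + ((0 : ℕ) : ZMod m) = d₂ := by push_cast; ring
  -- m = e₁ + e₂ + 2
  have hme : ((e₁ + e₂ + 2 : ℕ) : ZMod m) = 0 := by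
    have h1 : d₁ = d₁ + (((e₁ + 1 : ℕ) : ZMod m) + ((e₂ + 1 : ℕ) : ZMod m)) := by
      rw [← add_assoc, ← hc₁]; exact hc₂
    have h2 : (((e₁ + 1 : ℕ) : ZMod m) + ((e₂ + 1 : ℕ) : ZMod m)) = ((e₁ + e₂ + 2 : ℕ) : ZMod m) := by
      push_cast; ring
    rw [h2] at h1
    exact (left_eq_add.mp h1)
  have hdvd : m ∣ e₁ + e₂ + 2 := (ZMod.natCast_eq_zero_iff _ _).1 hme
  have hmeq : e₁ + e₂ + 2 = m := by
    obtain ⟨c, hc⟩ := hdvd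
    match c, hc with
    | 0, hc => omega
    | 1, hc => omega
    | (c+2), hc =>
      have h2 : m * 2 ≤ m * (c + 2) := Nat.mul_le_mul_left m (by omega)
      omega
  -- conversions
  have hx1eq : d₂ + ((e₂ + 1 : ℕ) : ZMod m) = d₁ := hc₂.symm
  have hp1 : d₂ + ((e₂ + 2 : ℕ) : ZMod m) = d₁ + 1 := by
    rw [hc₂]; push_cast; ring
  set x1 : V := f (d₂ + ((e₂ + 1 : ℕ) : ZMod m)) with hx1
  set x2 : V := f (d₂ + ((e₂:ℕ) : ZMod m)) with hx2
  set y0 : V := f (d₂ + ((0:ℕ) : ZMod m)) with hy0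
  set y1 : V := f (d₂ + ((e₂ + 2 : ℕ) : ZMod m)) with hy1
  set y2 : V := f (d₂ + ((e₂ - 1 : ℕ) : ZMod m)) with hy2
  have t01 : G.Adj v x1 := by rw [hx1, hx1eq]; exact hd₁
  have t02 : G.Adj v x2 := hg2end
  have t12 : G.Adj x1 x2 := (adjOff hadj d₂ (by omega) (by omega)).2 (Or.inr rfl)
  have b0 : G.Adj v y0 := by rw [hy0, h0eq]; exact hd₂
  have b1 : G.Adj x1 y1 := (adjOff hadj d₂ (by omega) (by omega)).2 (Or.inl (by omega))
  have b2 : G.Adj x2 y2 := (adjOff hadj d₂ (by omega) (by omega)).2 (Or.inr (by omega))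
  have n01 : ¬ G.Adj v y1 := by rw [hy1, hp1]; exact hd₁n
  have n02 : ¬ G.Adj v y2 := hgap2 (e₂ - 1) (by omega) (by omega)
  have n10 : ¬ G.Adj x1 y0 := by
    intro h
    rcases (adjOff hadj d₂ (by omega) (by omega)).1 h with h' | h' <;> omega
  have n12 : ¬ G.Adj x1 y2 := by
    intro h
    rcases (adjOff hadj d₂ (by omega) (by omega)).1 h with h' | h' <;> omega
  have n20 : ¬ G.Adj x2 y0 := by
    intro h
    rcases (adjOff hadj d₂ (by omega) (by omega)).1 h with h' | h' <;> omega
  have n21 : ¬ G.Adj x2 y1 := by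
    intro h
    rcases (adjOff hadj d₂ (by omega) (by omega)).1 h with h' | h' <;> omega
  have m01 : v ≠ y1 := hv _
  have m02 : v ≠ y2 := hv _
  have m10 : x1 ≠ y0 := by
    intro h; have := hinj h; rw [offEq d₂ (by omega) (by omega)] at this; omega
  have m12 : x1 ≠ y2 := by
    intro h; have := hinj h; rw [offEq d₂ (by omega) (by omega)] at this; omega
  have m20 : x2 ≠ y0 := by
    intro h; have := hinj h; rw [offEq d₂ (by omega) (by omega)] at this; omega
  have m21 : x2 ≠ y1 := by
    intro h; have := hinj h; rw [offEq d₂ (by omega) (by omega)] at this; omega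
  set X : Set V := {v, x1, x2, y0, y1, y2} with hX
  have hcard : X.ncard ≤ 10 := le_trans (ncard_le_six _ _ _ _ _ _) (by omega)
  have hint := prereduced_induce_interval hG X hcard
  exact net_free' hint
    ⟨v, by simp [hX]⟩ ⟨x1, by simp [hX]⟩ ⟨x2, by simp [hX]⟩
    ⟨y0, by simp [hX]⟩ ⟨y1, by simp [hX]⟩ ⟨y2, by simp [hX]⟩
    t01 t02 t12 b0 b1 b2
    n01 n02 (fun h => n10 h) n12 n20 n21
    (fun h => m01 (congrArg Subtype.val h)) (fun h => m02 (congrArg Subtype.val h))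
    (fun h => m10 (congrArg Subtype.val h)) (fun h => m12 (congrArg Subtype.val h))
    (fun h => m20 (congrArg Subtype.val h)) (fun h => m21 (congrArg Subtype.val h))

end subs

section glue

variable {V : Type*} [Fintype V] {G : SimpleGraph V} {m : ℕ} {f : ZMod m → V} {v : V}

lemma unique_descent (hG : Prereduced G) (hm : 11 ≤ m)
    (hinj : Function.Injective f)
    (hadj : ∀ i j : ZMod m, G.Adj (f i) (f j) ↔ (j = i + 1 ∨ i = j + 1))
    (hv : ∀ i, v ≠ f i)
    (d₁ d₂ : ZMod m)
    (hd₁ : G.Adj v (f d₁)) (hd₁n : ¬ G.Adj v (f (d₁ + 1)))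
    (hd₂ : G.Adj v (f d₂)) (hd₂n : ¬ G.Adj v (f (d₂ + 1))) : d₁ = d₂ := by
  by_contra hne
  obtain ⟨e₁, he₁9, _, hgap1, hg1end⟩ := exists_gap hG hm hinj hadj hv d₁ hd₁ hd₁n
  obtain ⟨e₂, he₂9, _, hgap2, hg2end⟩ := exists_gap hG hm hinj hadj hv d₂ hd₂ hd₂n
  have he₁m : e₁ ≤ m - 2 := gap_le hm d₁ d₂ hne hd₁ hd₁n hd₂ hd₂n e₁ (by omega) hgap1
  have he₂m : e₂ ≤ m - 2 := gap_le hm d₂ d₁ (Ne.symm hne) hd₂ hd₂n hd₁ hd₁n e₂ (by omega) hgap2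
  by_cases hA : d₂ = d₁ + ((e₁:ℕ) : ZMod m) ∨ d₂ = d₁ + ((e₁ + 1 : ℕ) : ZMod m)
  · by_cases hB : d₁ = d₂ + ((e₂:ℕ) : ZMod m) ∨ d₁ = d₂ + ((e₂ + 1 : ℕ) : ZMod m)
    · rcases hB with hB | hB
      · exact subB hG hm hinj hadj hv d₁ d₂ e₁ e₂ hd₁ hd₁n hd₂ he₁9 hgap1 he₂9 he₂m hgap2 hB
      · rcases hA with hA | hA
        · exact subB hG hm hinj hadj hv d₂ d₁ e₂ e₁ hd₂ hd₂n hd₁ he₂9 hgap2 he₁9 he₁m hgap1 hA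
        · exact subC hG hm hinj hadj hv d₁ d₂ e₁ e₂ hd₁ hd₁n hd₂ he₁9 he₁m he₂9 he₂m hgap2 hg2end hA hB
    · push_neg at hB
      exact subA hG hm hinj hadj hv d₂ d₁ e₂ (Ne.symm hne) hd₂ hd₂n hd₁ hd₁n he₂9 he₂m hgap2
        hg2end hB.1 hB.2
  · push_neg at hA
    exact subA hG hm hinj hadj hv d₁ d₂ e₁ hne hd₁ hd₁n hd₂ hd₂n he₁9 he₁m hgap1 hg1end hA.1 hA.2

end glue

/-- In a prereduced graph, the closed neighborhood of any vertex in a hole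
is consecutive in the hole, and is either the whole hole or has fewer than `|H| − 7`
vertices. -/
theorem stmt_9 {V : Type*} [Fintype V] (G : SimpleGraph V) (hG : Prereduced G)
    (H : Set V) (hH : IsHole G H) (v : V) :
    ((closedNbhd G v ∩ H = ∅) ∨
      ∃ m : ℕ, 4 ≤ m ∧ ∃ f : ZMod m → V,
        Function.Injective f ∧ Set.range f = H ∧
        (∀ i j : ZMod m, G.Adj (f i) (f j) ↔ (j = i + 1 ∨ i = j + 1)) ∧
        ∃ jmax : ℕ, jmax < m ∧
          closedNbhd G v ∩ H = f '' ((fun k : ℕ => (k : ZMod m)) '' Set.Iic jmax)) ∧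
    (closedNbhd G v ∩ H = H ∨
      ((closedNbhd G v ∩ H).ncard : ℤ) < (H.ncard : ℤ) - 7) := by
  classical
  obtain ⟨m, hm4, f, hinj, hrange, hadj⟩ := hH
  haveI : NeZero m := ⟨by omega⟩
  have hmemH : ∀ i : ZMod m, f i ∈ H := fun i => hrange ▸ Set.mem_range_self i
  have hHcard : H.ncard = m := by
    rw [← hrange, ← Set.image_univ, Set.ncard_image_of_injective _ hinj, Set.ncard_univ,
      Nat.card_eq_fintype_card, ZMod.card]
  have hzeroeq : (0 : ZMod m) = ((0:ℕ) : ZMod m) := by norm_num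
  -- Step 1 : m ≥ 11
  have hm : 11 ≤ m := by
    by_contra hlt
    push_neg at hlt
    have hcard10 : H.ncard ≤ 10 := by rw [hHcard]; omega
    have hint := prereduced_induce_interval hG H hcard10
    refine cycle_free hint (m - 2) (by omega) ⟨f 0, hmemH 0⟩
      (fun i => ⟨f ((1 + i : ℕ) : ZMod m), hmemH _⟩) ?_ ?_ ?_ ?_ ?_ ?_
    · show G.Adj (f 0) (f ((1 + 0 : ℕ) : ZMod m))
      rw [hadj]; left; norm_num
    · show G.Adj (f 0) (f ((1 + (m - 2) : ℕ) : ZMod m))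
      rw [hadj]; right
      rw [castSucc, show 1 + (m - 2) + 1 = m by omega, ZMod.natCast_self]
    · intro i hi1 hi2
      constructor
      · show ¬ G.Adj (f 0) (f ((1 + i : ℕ) : ZMod m))
        rw [hadj]
        rintro (h | h)
        · rw [zero_add, show (1 : ZMod m) = ((1:ℕ) : ZMod m) by norm_num] at h
          rw [castEq (by omega) (by omega)] at h
          omega
        · rw [castSucc, hzeroeq] at h
          rw [castEq (by omega) (by omega)] at h
          omega
      · intro hh
        have h2 : f 0 = f ((1 + i : ℕ) : ZMod m) := congrArg Subtype.val hh
        have h3 := hinj h2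
        rw [hzeroeq] at h3
        rw [castEq (by omega) (by omega)] at h3
        omega
    · intro i hi
      show G.Adj (f ((1 + i : ℕ) : ZMod m)) (f ((1 + (i + 1) : ℕ) : ZMod m))
      rw [hadj]; left
      push_cast
      ring
    · show ¬ G.Adj (f ((1 + 0 : ℕ) : ZMod m)) (f ((1 + (m - 2) : ℕ) : ZMod m))
      rw [hadj]
      rintro (h | h)
      · rw [castSucc] at h
        rw [castEq (by omega) (by omega)] at h
        omega
      · rw [castSucc, show 1 + (m - 2) + 1 = m by omega, ZMod.natCast_self, hzeroeq] at h
        rw [castEq (by omega) (by omega)] at h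
        omega
    · intro hh
      have h2 : f ((1 + 0 : ℕ) : ZMod m) = f ((1 + (m - 2) : ℕ) : ZMod m) :=
        congrArg Subtype.val hh
      have h3 := hinj h2
      rw [castEq (by omega) (by omega)] at h3
      omega
  -- shifted holes
  have hrange' : ∀ c : ZMod m, Set.range (fun j => f (c + j)) = H := by
    intro c
    rw [← hrange]
    ext w
    constructor
    · rintro ⟨j, rfl⟩; exact ⟨c + j, rfl⟩
    · rintro ⟨i, rfl⟩; exact ⟨i - c, congrArg f (by ring)⟩
  have hadj' : ∀ c i j : ZMod m, G.Adj (f (c + i)) (f (c + j)) ↔ (j = i + 1 ∨ i = j + 1) := by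
    intro c i j
    rw [hadj, add_assoc, add_assoc, add_right_inj, add_right_inj]
  have hone : (1 : ZMod m) ≠ 0 := by
    rw [show (1 : ZMod m) = ((1:ℕ) : ZMod m) by norm_num, hzeroeq]
    rw [Ne, castEq (by omega) (by omega)]
    omega
  have htwo : (2 : ZMod m) ≠ 0 := by
    rw [show (2 : ZMod m) = ((2:ℕ) : ZMod m) by norm_num, hzeroeq]
    rw [Ne, castEq (by omega) (by omega)]
    omega
  by_cases hvH : v ∈ H
  -- ==================== CASE v ∈ H ====================
  · obtain ⟨i₀, hi₀⟩ : ∃ i₀, f i₀ = v := by rw [← hrange] at hvH; exact hvH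
    have hNH : closedNbhd G v ∩ H = f '' {i₀ - 1, i₀, i₀ + 1} := by
      ext w
      constructor
      · rintro ⟨hw1, hw2⟩
        rw [← hrange] at hw2
        obtain ⟨i, rfl⟩ := hw2
        rcases Set.mem_insert_iff.mp hw1 with h | h
        · refine ⟨i, ?_, rfl⟩
          have hii := hinj (h.trans hi₀.symm)
          simp [hii]
        · refine ⟨i, ?_, rfl⟩
          rw [← hi₀] at h
          rw [SimpleGraph.mem_neighborSet, hadj] at h
          rcases h with h | h
          · simp [h]
          · have : i = i₀ - 1 := by rw [h]; ring
            simp [this]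
      · rintro ⟨i, hi, rfl⟩
        simp only [Set.mem_insert_iff, Set.mem_singleton_iff] at hi
        refine ⟨?_, hmemH i⟩
        rcases hi with rfl | rfl | rfl
        · refine Set.mem_insert_of_mem _ ?_
          show G.Adj v (f (i₀ - 1))
          rw [← hi₀, hadj]
          right
          rw [sub_add_cancel]
        · rw [hi₀]; exact Set.mem_insert _ _
        · refine Set.mem_insert_of_mem _ ?_
          show G.Adj v (f (i₀ + 1))
          rw [← hi₀, hadj]
          left
          rfl
    have hne1 : i₀ - 1 ≠ i₀ := fun h => hone (sub_eq_self.mp h)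
    have hne3 : i₀ ≠ i₀ + 1 := fun h => hone (left_eq_add.mp h)
    have hne2 : i₀ - 1 ≠ i₀ + 1 := by
      intro h
      apply htwo
      have h1 := sub_eq_iff_eq_add.mp h
      rw [add_assoc] at h1
      have h2 := left_eq_add.mp h1
      rw [← h2]; norm_num
    constructor
    · right
      refine ⟨m, hm4, fun j => f (i₀ - 1 + j), hinj.comp (add_right_injective _),
        hrange' _, fun i j => hadj' _ i j, 2, by omega, ?_⟩
      rw [hNH]
      have himg : (fun k : ℕ => (k : ZMod m)) '' Set.Iic 2 = {0, 1, 2} := by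
        ext z
        simp only [Set.mem_image, Set.mem_Iic, Set.mem_insert_iff, Set.mem_singleton_iff]
        constructor
        · rintro ⟨k, hk, rfl⟩
          interval_cases k
          · left; norm_num
          · right; left; norm_num
          · right; right; norm_num
        · rintro (rfl | rfl | rfl)
          · exact ⟨0, by omega, by norm_num⟩
          · exact ⟨1, by omega, by norm_num⟩
          · exact ⟨2, by omega, by norm_num⟩
      rw [himg]
      rw [Set.image_insert_eq, Set.image_insert_eq, Set.image_singleton,
        Set.image_insert_eq, Set.image_insert_eq, Set.image_singleton]
      have e0 : i₀ - 1 + 0 = i₀ - 1 := by ring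
      have e1 : i₀ - 1 + 1 = i₀ := by ring
      have e2 : i₀ - 1 + 2 = i₀ + 1 := by ring
      rw [e0, e1, e2]
    · right
      rw [hNH, Set.ncard_image_of_injective _ hinj, hHcard]
      rw [Set.ncard_insert_of_notMem (by simp [hne1, hne2]) (Set.toFinite _),
        Set.ncard_insert_of_notMem (by simp [hne3]) (Set.toFinite _),
        Set.ncard_singleton]
      omega
  -- ==================== CASE v ∉ H ====================
  · have hv : ∀ i, v ≠ f i := fun i h => hvH (by rw [← hrange]; exact ⟨i, h.symm⟩)
    have hNT : closedNbhd G v ∩ H = f '' {i : ZMod m | G.Adj v (f i)} := by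
      ext w
      constructor
      · rintro ⟨hw1, hw2⟩
        rw [← hrange] at hw2
        obtain ⟨i, rfl⟩ := hw2
        rcases Set.mem_insert_iff.mp hw1 with h | h
        · exact absurd h.symm (hv i)
        · exact ⟨i, h, rfl⟩
      · rintro ⟨i, hi, rfl⟩
        exact ⟨Set.mem_insert_of_mem _ hi, hmemH i⟩
    by_cases hTe : {i : ZMod m | G.Adj v (f i)} = ∅
    · constructor
      · left
        rw [hNT, hTe, Set.image_empty]
      · right
        rw [hNT, hTe, Set.image_empty, Set.ncard_empty, hHcard]
        omega
    by_cases hTu : {i : ZMod m | G.Adj v (f i)} = Set.univ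
    · constructor
      · right
        refine ⟨m, hm4, f, hinj, hrange, hadj, m - 1, by omega, ?_⟩
        have himg : (fun k : ℕ => (k : ZMod m)) '' Set.Iic (m - 1) = Set.univ := by
          apply Set.eq_univ_of_forall
          intro z
          exact ⟨z.val, Set.mem_Iic.mpr (by have := ZMod.val_lt z; omega),
            by show ((z.val : ℕ) : ZMod m) = z; rw [ZMod.natCast_val, ZMod.cast_id]⟩
        rw [hNT, hTu, himg]
      · left
        rw [hNT, hTu, Set.image_univ, hrange]
    -- proper nonempty case
    · obtain ⟨i0, hiT⟩ := Set.nonempty_iff_ne_empty.mpr hTe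
      obtain ⟨j0, hjT⟩ : ∃ j, j ∉ {i : ZMod m | G.Adj v (f i)} := by
        by_contra h
        push_neg at h
        exact hTu (Set.eq_univ_of_forall h)
      rw [Set.mem_setOf_eq] at hiT
      rw [Set.mem_setOf_eq] at hjT
      -- existence of a descent
      have hdesc : ∃ d : ZMod m, G.Adj v (f d) ∧ ¬ G.Adj v (f (d + 1)) := by
        have hexl : ∃ l : ℕ, 1 ≤ l ∧ ¬ G.Adj v (f (i0 + (l : ZMod m))) := by
          refine ⟨(j0 - i0).val, ?_, ?_⟩
          · rw [Nat.one_le_iff_ne_zero]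
            intro h0
            have h1 : j0 - i0 = 0 := (ZMod.val_eq_zero _).mp h0
            have h2 : j0 = i0 := sub_eq_zero.mp h1
            exact hjT (h2 ▸ hiT)
          · rw [ZMod.natCast_val, ZMod.cast_id]
            have h3 : i0 + (j0 - i0) = j0 := by ring
            rw [h3]
            exact hjT
        have hl1 := (Nat.find_spec hexl).1
        have hlnT := (Nat.find_spec hexl).2
        refine ⟨i0 + ((Nat.find hexl - 1 : ℕ) : ZMod m), ?_, ?_⟩
        · by_cases h1 : Nat.find hexl = 1
          · rw [h1]
            have h2 : i0 + ((1 - 1 : ℕ) : ZMod m) = i0 := by norm_num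
            rw [h2]
            exact hiT
          · by_contra hc
            exact Nat.find_min hexl (show Nat.find hexl - 1 < Nat.find hexl by omega)
              ⟨by omega, hc⟩
        · rw [add_assoc, castSucc, show Nat.find hexl - 1 + 1 = Nat.find hexl by omega]
          exact hlnT
      obtain ⟨d, hdT, hdnT⟩ := hdesc
      have huniq : ∀ d' : ZMod m, G.Adj v (f d') → ¬ G.Adj v (f (d' + 1)) → d' = d :=
        fun d' h1 h2 => unique_descent hG hm hinj hadj hv d' d h1 h2 hdT hdnT
      -- the backward run length r
      have hexr : ∃ k : ℕ, 1 ≤ k ∧ ¬ G.Adj v (f (d - (k : ZMod m))) := by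
        refine ⟨(d - j0).val, ?_, ?_⟩
        · rw [Nat.one_le_iff_ne_zero]
          intro h0
          have h1 : d - j0 = 0 := (ZMod.val_eq_zero _).mp h0
          have h2 : d = j0 := sub_eq_zero.mp h1
          exact hjT (h2 ▸ hdT)
        · rw [ZMod.natCast_val, ZMod.cast_id]
          have h3 : d - (d - j0) = j0 := by ring
          rw [h3]
          exact hjT
      set r := Nat.find hexr with hrdef
      have hr1 : 1 ≤ r := (Nat.find_spec hexr).1
      have hrnT : ¬ G.Adj v (f (d - (r : ZMod m))) := (Nat.find_spec hexr).2
      have hrm : r ≤ m - 1 := by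
        have hle : r ≤ (d - j0).val := Nat.find_min' hexr ⟨by
            rw [Nat.one_le_iff_ne_zero]
            intro h0
            have h1 : d - j0 = 0 := (ZMod.val_eq_zero _).mp h0
            have h2 : d = j0 := sub_eq_zero.mp h1
            exact hjT (h2 ▸ hdT), by
            rw [ZMod.natCast_val, ZMod.cast_id]
            have h3 : d - (d - j0) = j0 := by ring
            rw [h3]
            exact hjT⟩
        have := ZMod.val_lt (d - j0)
        omega
      have hmemT : ∀ k : ℕ, k ≤ r - 1 → G.Adj v (f (d - (k : ZMod m))) := by
        intro k hk
        by_cases h0 : k = 0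
        · subst h0
          have h1 : d - ((0:ℕ) : ZMod m) = d := by push_cast; ring
          rw [h1]
          exact hdT
        · by_contra hc
          exact Nat.find_min hexr (show k < r by omega) ⟨by omega, hc⟩
      set t := d - ((r - 1 : ℕ) : ZMod m) with htdef
      have hTchar : {i : ZMod m | G.Adj v (f i)} =
          (fun i => t + i) '' ((fun k : ℕ => (k : ZMod m)) '' Set.Iic (r - 1)) := by
        ext i
        simp only [Set.mem_setOf_eq, Set.mem_image, Set.mem_Iic]
        constructor
        · intro hiTm
          have hexl : ∃ l : ℕ, 1 ≤ l ∧ ¬ G.Adj v (f (i + (l : ZMod m))) := by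
            refine ⟨(d + 1 - i).val, ?_, ?_⟩
            · rw [Nat.one_le_iff_ne_zero]
              intro h0
              have h1 : d + 1 - i = 0 := (ZMod.val_eq_zero _).mp h0
              have h2 : d + 1 = i := sub_eq_zero.mp h1
              exact hdnT (by rw [h2]; exact hiTm)
            · rw [ZMod.natCast_val, ZMod.cast_id]
              have h3 : i + (d + 1 - i) = d + 1 := by ring
              rw [h3]
              exact hdnT
          have hl1 := (Nat.find_spec hexl).1
          have hlnT := (Nat.find_spec hexl).2
          have hl_mem : ∀ l', l' < Nat.find hexl → G.Adj v (f (i + (l' : ZMod m))) := by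
            intro l' hl'
            by_cases h0 : l' = 0
            · subst h0
              have h1 : i + ((0:ℕ) : ZMod m) = i := by push_cast; ring
              rw [h1]
              exact hiTm
            · by_contra hc
              exact Nat.find_min hexl hl' ⟨by omega, hc⟩
          have hld : i + ((Nat.find hexl - 1 : ℕ) : ZMod m) = d := by
            apply huniq
            · exact hl_mem _ (by omega)
            · rw [add_assoc, castSucc, show Nat.find hexl - 1 + 1 = Nat.find hexl by omega]
              exact hlnT
          have hlr : Nat.find hexl - 1 ≤ r - 1 := by
            by_contra hgt
            push_neg at hgt
            apply hrnT
            have heq2 : i + ((Nat.find hexl - 1 - r : ℕ) : ZMod m) = d - (r : ZMod m) := by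
              rw [← hld, Nat.cast_sub (show r ≤ Nat.find hexl - 1 by omega)]
              ring
            rw [← heq2]
            exact hl_mem _ (by omega)
          refine ⟨(((r-1) - (Nat.find hexl - 1) : ℕ) : ZMod m),
            ⟨(r-1) - (Nat.find hexl - 1), by omega, rfl⟩, ?_⟩
          rw [Nat.cast_sub hlr, htdef, ← hld]
          ring
        · rintro ⟨z, ⟨k, hk, rfl⟩, rfl⟩
          have h1 : t + (k : ZMod m) = d - ((r - 1 - k : ℕ) : ZMod m) := by
            rw [htdef, Nat.cast_sub hk]
            ring
          rw [h1]
          exact hmemT (r - 1 - k) (by omega)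
      constructor
      · right
        refine ⟨m, hm4, fun i => f (t + i), hinj.comp (add_right_injective _),
          hrange' _, fun i j => hadj' _ i j, r - 1, by omega, ?_⟩
        rw [hNT, hTchar, Set.image_image]
      · right
        rw [hNT, hHcard, Set.ncard_image_of_injective _ hinj]
        have hIiccard : (Set.Iic (r - 1)).ncard = r - 1 + 1 := by
          simp [← Nat.card_coe_set_eq, Nat.card_eq_fintype_card]
        have hTcard : {i : ZMod m | G.Adj v (f i)}.ncard = r := by
          rw [hTchar, Set.ncard_image_of_injective _ (add_right_injective t),
            Set.ncard_image_of_injOn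
              (fun a ha b hb hab => (castEq
                (by have := Set.mem_Iic.mp ha; omega)
                (by have := Set.mem_Iic.mp hb; omega)).mp hab)]
          omega
        obtain ⟨e, he9, hem, hgap, hgend⟩ := exists_gap hG hm hinj hadj hv d hdT hdnT
        have hGScard : ((fun j : ℕ => d + (j : ZMod m)) '' Set.Icc 1 (e - 1)).ncard = e - 1 := by
          rw [Set.ncard_image_of_injOn
            (fun a ha b hb hab => (offEq d
              (by have := (Set.mem_Icc.mp ha).2; omega)
              (by have := (Set.mem_Icc.mp hb).2; omega)).mp hab)]
          rw [← Nat.card_coe_set_eq, Nat.card_eq_fintype_card]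
          simp
        have hdisj : Disjoint {i : ZMod m | G.Adj v (f i)}
            ((fun j : ℕ => d + (j : ZMod m)) '' Set.Icc 1 (e - 1)) := by
          rw [Set.disjoint_left]
          rintro a haT ⟨j, hj, rfl⟩
          rw [Set.mem_Icc] at hj
          exact hgap j hj.1 (by omega) haT
        have hsum := Set.ncard_union_eq hdisj (Set.toFinite _) (Set.toFinite _)
        have hunion : ({i : ZMod m | G.Adj v (f i)} ∪
            (fun j : ℕ => d + (j : ZMod m)) '' Set.Icc 1 (e - 1)).ncard ≤ m := by
          have h2 := Set.ncard_le_ncard (Set.subset_univ ({i : ZMod m | G.Adj v (f i)} ∪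
            (fun j : ℕ => d + (j : ZMod m)) '' Set.Icc 1 (e - 1))) Set.finite_univ
          rwa [Set.ncard_univ, Nat.card_eq_fintype_card, ZMod.card] at h2
        rw [hTcard]
        omega
end

section
/- Let G be a finite prereduced graph, H a shortest hole of G (a hole of minimum cardinality among all holes of G), and v a vertex of G that is not a common neighbor of H. Then |N_H[v]| ≤ 3. -/
lemma zmod_cast_inj {m a b : ℕ} (ha : a < m) (hb : b < m) :
    ((a : ZMod m) = (b : ZMod m)) ↔ a = b := by
  constructor
  · intro h
    have := congrArg ZMod.val h
    rwa [ZMod.val_cast_of_lt ha, ZMod.val_cast_of_lt hb] at this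
  · rintro rfl; rfl

lemma zmod_valCast {m : ℕ} [NeZero m] (x : ZMod m) : ((x.val : ℕ) : ZMod m) = x :=
  ZMod.natCast_rightInverse x

lemma zmod_succ_iff {k : ℕ} [NeZero k] (a b : ZMod k) (h : a.val + 1 < k) :
    b = a + 1 ↔ b.val = a.val + 1 := by
  conv_lhs => rw [← zmod_valCast a, ← zmod_valCast b]
  rw [show ((a.val : ℕ) : ZMod k) + 1 = ((a.val + 1 : ℕ) : ZMod k) by push_cast; ring]
  exact zmod_cast_inj (ZMod.val_lt b) h

lemma ncard_triple_le {α : Type*} (a b c : α) : ({a, b, c} : Set α).ncard ≤ 3 := by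
  calc ({a, b, c} : Set α).ncard ≤ ({b, c} : Set α).ncard + 1 := Set.ncard_insert_le _ _
    _ ≤ (({c} : Set α).ncard + 1) + 1 := by
        have := Set.ncard_insert_le b ({c} : Set α); omega
    _ ≤ 3 := by rw [Set.ncard_singleton]

/-- In a prereduced graph, a vertex that is not a common neighbor of a
shortest hole `H` has at most 3 closed neighbors in `H`. -/
theorem stmt_10 {V : Type*} [Fintype V] (G : SimpleGraph V) (hG : Prereduced G)
    (H : Set V) (hH : IsHole G H)
    (hshort : ∀ H' : Set V, IsHole G H' → H.ncard ≤ H'.ncard)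
    (v : V) (hv : v ∉ commonNbrs G H) :
    (closedNbhd G v ∩ H).ncard ≤ 3 := by
  obtain ⟨m, hm4, f, finj, frange, fadj⟩ := hH
  haveI : NeZero m := ⟨by omega⟩
  by_cases hvH : v ∈ H
  · -- v lies on the hole
    rw [← frange] at hvH
    obtain ⟨i0, rfl⟩ := hvH
    have hsub : closedNbhd G (f i0) ∩ H ⊆ {f (i0 - 1), f i0, f (i0 + 1)} := by
      rintro x ⟨hx1, hx2⟩
      rw [← frange] at hx2
      obtain ⟨j, rfl⟩ := hx2
      rcases Set.mem_insert_iff.mp hx1 with h | h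
      · exact Or.inr (Or.inl (by rw [h]))
      · rcases (fadj i0 j).mp h with h1 | h1
        · exact Or.inr (Or.inr (by rw [h1]; exact Set.mem_singleton _))
        · left
          have : j = i0 - 1 := by rw [h1]; ring
          rw [this]
    calc (closedNbhd G (f i0) ∩ H).ncard ≤ ({f (i0 - 1), f i0, f (i0 + 1)} : Set V).ncard :=
          Set.ncard_le_ncard hsub (Set.toFinite _)
      _ ≤ 3 := ncard_triple_le _ _ _
  · -- v is off the hole
    set S : Set (ZMod m) := {j : ZMod m | G.Adj v (f j)} with hS
    have himg : closedNbhd G v ∩ H = f '' S := by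
      ext x
      constructor
      · rintro ⟨hx1, hx2⟩
        rw [← frange] at hx2
        obtain ⟨j, rfl⟩ := hx2
        rcases Set.mem_insert_iff.mp hx1 with h | h
        · exact absurd (frange ▸ Set.mem_range_self j : f j ∈ H) (h ▸ hvH)
        · exact ⟨j, h, rfl⟩
      · rintro ⟨j, hj, rfl⟩
        exact ⟨Set.mem_insert_iff.mpr (Or.inr hj), frange ▸ Set.mem_range_self j⟩
    rw [himg, Set.ncard_image_of_injective _ finj]
    rcases Set.eq_empty_or_nonempty S with hSe | ⟨i0, hi0⟩
    · simp [hSe]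
    -- there is a neighbor index whose successor is not a neighbor index
    have hex : ∃ i ∈ S, i + 1 ∉ S := by
      by_contra h
      push_neg at h
      apply hv
      intro x hx
      rw [← frange] at hx
      obtain ⟨j, rfl⟩ := hx
      have hstep : ∀ n : ℕ, i0 + (n : ZMod m) ∈ S := by
        intro n
        induction n with
        | zero => simpa using hi0
        | succ n ih =>
            have := h _ ih
            rwa [show i0 + ((n + 1 : ℕ) : ZMod m) = i0 + (n : ZMod m) + 1 by push_cast; ring]
      have := hstep (j - i0).val
      rwa [zmod_valCast, add_sub_cancel] at this
    obtain ⟨i, hiS, hi1⟩ := hex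
    have hPex : ∃ n : ℕ, 0 < n ∧ i + (n : ZMod m) ∈ S :=
      ⟨m, by omega, by rwa [ZMod.natCast_self, add_zero]⟩
    classical
    set d := Nat.find hPex with hd_def
    obtain ⟨hdpos, hdS⟩ := Nat.find_spec hPex
    have hdle : d ≤ m := Nat.find_le ⟨by omega, by rwa [ZMod.natCast_self, add_zero]⟩
    have hmin : ∀ t : ℕ, 0 < t → t < d → i + (t : ZMod m) ∉ S := by
      intro t ht htd hmem
      exact Nat.find_min hPex htd ⟨ht, hmem⟩
    have hd2 : 2 ≤ d := by
      rcases Nat.lt_or_ge d 2 with h | h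
      · exfalso
        apply hi1
        have hd1 : Nat.find hPex = 1 := by omega
        rw [hd1] at hdS
        simpa using hdS
      · exact h
    have hvr : v ∉ Set.range f := frange ▸ hvH
    -- key: d + 2 ≥ m, else we construct a shorter hole through v
    have hkey : m ≤ d + 2 := by
      by_contra hlt
      push_neg at hlt
      set k := d + 2 with hk_def
      haveI : NeZero k := ⟨by omega⟩
      set g : ZMod k → V := fun t => if t.val ≤ d then f (i + (t.val : ZMod m)) else v with hg
      have hvalk : ∀ t : ZMod k, t.val ≤ d + 1 := fun t => by
        have := ZMod.val_lt t; omega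
      have hgf : ∀ t : ZMod k, t.val ≤ d → g t = f (i + (t.val : ZMod m)) := by
        intro t ht; simp [hg, ht]
      have hgv : ∀ t : ZMod k, t.val = d + 1 → g t = v := by
        intro t ht; simp [hg, ht]
      have hcastm : ∀ a b : ℕ, a ≤ d + 1 → b ≤ d + 1 →
          ((i + (a : ZMod m) = i + (b : ZMod m)) ↔ a = b) := by
        intro a b ha hb
        rw [add_right_inj]
        exact zmod_cast_inj (by omega) (by omega)
      have ginj : Function.Injective g := by
        intro a b hab
        rcases le_or_gt a.val d with ha | ha <;> rcases le_or_gt b.val d with hb | hb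
        · rw [hgf a ha, hgf b hb] at hab
          have := (hcastm a.val b.val (by omega) (by omega)).mp (finj hab)
          exact ZMod.val_injective k this
        · rw [hgf a ha, hgv b (by have := hvalk b; omega)] at hab
          exact absurd ⟨_, hab⟩ hvr
        · rw [hgv a (by have := hvalk a; omega), hgf b hb] at hab
          exact absurd ⟨_, hab.symm⟩ hvr
        · have := hvalk a; have := hvalk b
          exact ZMod.val_injective k (by omega)
      -- characterizing membership of i + t in S for t ≤ d
      have hmemS : ∀ t : ℕ, t ≤ d → (i + (t : ZMod m) ∈ S ↔ t = 0 ∨ t = d) := by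
        intro t ht
        constructor
        · intro hmem
          by_contra hc
          push_neg at hc
          exact hmin t (by omega) (by omega) hmem
        · rintro (rfl | rfl)
          · simpa using hiS
          · exact hdS
      have gadj : ∀ a b : ZMod k, G.Adj (g a) (g b) ↔ (b = a + 1 ∨ a = b + 1) := by
        intro a b
        rcases le_or_gt a.val d with ha | ha <;> rcases le_or_gt b.val d with hb | hb
        · -- both on the path
          rw [hgf a ha, hgf b hb, fadj]
          rw [show i + (a.val : ZMod m) + 1 = i + ((a.val + 1 : ℕ) : ZMod m) by push_cast; ring,
            show i + (b.val : ZMod m) + 1 = i + ((b.val + 1 : ℕ) : ZMod m) by push_cast; ring,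
            hcastm b.val (a.val + 1) (by omega) (by omega),
            hcastm a.val (b.val + 1) (by omega) (by omega),
            zmod_succ_iff a b (by omega), zmod_succ_iff b a (by omega)]
        · -- b is v
          have hb' : b.val = d + 1 := by have := hvalk b; omega
          rw [hgf a ha, hgv b hb']
          have lhs : G.Adj (f (i + (a.val : ZMod m))) v ↔ (a.val = 0 ∨ a.val = d) := by
            rw [SimpleGraph.adj_comm]
            exact hmemS a.val ha
          rw [lhs]
          have hb1 : b + 1 = 0 := by
            rw [← zmod_valCast b, hb', show ((d + 1 : ℕ) : ZMod k) + 1 = ((k : ℕ) : ZMod k) by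
              rw [hk_def]; push_cast; ring, ZMod.natCast_self]
          have h1 : b = a + 1 ↔ a.val = d := by
            rw [zmod_succ_iff a b (by omega), hb']; omega
          have h2 : a = b + 1 ↔ a.val = 0 := by
            rw [hb1, ← ZMod.val_eq_zero]
          rw [h1, h2]; tauto
        · -- a is v
          have ha' : a.val = d + 1 := by have := hvalk a; omega
          rw [hgv a ha', hgf b hb]
          have lhs : G.Adj v (f (i + (b.val : ZMod m))) ↔ (b.val = 0 ∨ b.val = d) :=
            hmemS b.val hb
          rw [lhs]
          have ha1 : a + 1 = 0 := by
            rw [← zmod_valCast a, ha', show ((d + 1 : ℕ) : ZMod k) + 1 = ((k : ℕ) : ZMod k) by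
              rw [hk_def]; push_cast; ring, ZMod.natCast_self]
          have h1 : a = b + 1 ↔ b.val = d := by
            rw [zmod_succ_iff b a (by omega), ha']; omega
          have h2 : b = a + 1 ↔ b.val = 0 := by
            rw [ha1, ← ZMod.val_eq_zero]
          rw [h1, h2]
        · -- both v
          have ha' : a.val = d + 1 := by have := hvalk a; omega
          have hb' : b.val = d + 1 := by have := hvalk b; omega
          have hab : a = b := ZMod.val_injective k (by omega)
          rw [hgv a ha', hgv b hb']
          simp only [SimpleGraph.irrefl, false_iff]
          rintro (h | h) <;>
          · rw [hab] at h
            have h1 : ((1 : ℕ) : ZMod k) = ((0 : ℕ) : ZMod k) := by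
              have := left_eq_add.mp h
              simpa using this
            exact absurd ((zmod_cast_inj (by omega) (by omega)).mp h1) (by omega)
      have hH' : IsHole G (Set.range g) := ⟨k, by omega, g, ginj, rfl, gadj⟩
      have hcard : H.ncard = m := by
        rw [← frange, ← Nat.card_coe_set_eq, Nat.card_range_of_injective finj, Nat.card_zmod]
      have hcard' : (Set.range g).ncard = k := by
        rw [← Nat.card_coe_set_eq, Nat.card_range_of_injective ginj, Nat.card_zmod]
      have := hshort _ hH'
      omega
    -- conclude: S ⊆ {i, i - 1, i - 2}
    have hsub : S ⊆ {i, i - 1, i - 2} := by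
      intro j hj
      have hjt : j = i + (((j - i).val : ℕ) : ZMod m) := by rw [zmod_valCast]; ring
      set t := (j - i).val with ht_def
      have htlt : t < m := ZMod.val_lt _
      rcases Nat.eq_zero_or_pos t with ht0 | htpos
      · left; rw [hjt, ht0]; simp
      · have htd : d ≤ t := by
          by_contra hc
          push_neg at hc
          exact hmin t htpos hc (hjt ▸ hj)
        have : t = m - 1 ∨ t = m - 2 := by omega
        rcases this with h | h
        · have hje : j = i - 1 := by
            rw [hjt, h, Nat.cast_sub (by omega : 1 ≤ m), ZMod.natCast_self]
            push_cast; ring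
          rw [hje]; right; left; rfl
        · have hje : j = i - 2 := by
            rw [hjt, h, Nat.cast_sub (by omega : 2 ≤ m), ZMod.natCast_self]
            push_cast; ring
          rw [hje]; right; right; rfl
    calc S.ncard ≤ ({i, i - 1, i - 2} : Set (ZMod m)).ncard :=
          Set.ncard_le_ncard hsub (Set.toFinite _)
      _ ≤ 3 := ncard_triple_le _ _ _
end

section
/- Let G be a finite prereduced graph, H a hole of G, and v a common neighbor of H. Then v is adjacent to every vertex of N[H] \ {v}. -/
open Set

lemma icc_disj_s11 {a b c d : ℝ} (hab : a ≤ b) (hcd : c ≤ d)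
    (h : Icc a b ∩ Icc c d = ∅) : b < c ∨ d < a := by
  by_contra h'
  push_neg at h'
  have : max a c ∈ Icc a b ∩ Icc c d := by
    constructor <;> simp [mem_Icc, le_max_iff, max_le_iff] <;> constructor <;> linarith
  rw [h] at this
  exact this

lemma key_contra (a0 b0 a1 b1 a2 b2 a3 b3 a4 b4 au bu av bv : ℝ)
    (h0 : a0 ≤ b0) (h1 : a1 ≤ b1) (h2 : a2 ≤ b2) (h3 : a3 ≤ b3) (h4 : a4 ≤ b4)
    (hu : au ≤ bu) (hv : av ≤ bv)
    (n01 : (Icc a0 b0 ∩ Icc a1 b1).Nonempty)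
    (n12 : (Icc a1 b1 ∩ Icc a2 b2).Nonempty)
    (n23 : (Icc a2 b2 ∩ Icc a3 b3).Nonempty)
    (n34 : (Icc a3 b3 ∩ Icc a4 b4).Nonempty)
    (nv0 : (Icc av bv ∩ Icc a0 b0).Nonempty)
    (nv4 : (Icc av bv ∩ Icc a4 b4).Nonempty)
    (nu2 : (Icc au bu ∩ Icc a2 b2).Nonempty)
    (e02 : Icc a0 b0 ∩ Icc a2 b2 = ∅)
    (e03 : Icc a0 b0 ∩ Icc a3 b3 = ∅)
    (e04 : Icc a0 b0 ∩ Icc a4 b4 = ∅)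
    (e14 : Icc a1 b1 ∩ Icc a4 b4 = ∅)
    (e24 : Icc a2 b2 ∩ Icc a4 b4 = ∅)
    (euv : Icc au bu ∩ Icc av bv = ∅) : False := by
  obtain ⟨x01, ⟨x01a, x01b⟩, x01c, x01d⟩ := n01
  obtain ⟨x12, ⟨x12a, x12b⟩, x12c, x12d⟩ := n12
  obtain ⟨x23, ⟨x23a, x23b⟩, x23c, x23d⟩ := n23
  obtain ⟨x34, ⟨x34a, x34b⟩, x34c, x34d⟩ := n34
  obtain ⟨xv0, ⟨xv0a, xv0b⟩, xv0c, xv0d⟩ := nv0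
  obtain ⟨xv4, ⟨xv4a, xv4b⟩, xv4c, xv4d⟩ := nv4
  obtain ⟨xu2, ⟨xu2a, xu2b⟩, xu2c, xu2d⟩ := nu2
  rcases icc_disj_s11 h0 h2 e02 with d02 | d02 <;>
  rcases icc_disj_s11 h0 h3 e03 with d03 | d03 <;>
  rcases icc_disj_s11 h0 h4 e04 with d04 | d04 <;>
  rcases icc_disj_s11 h1 h4 e14 with d14 | d14 <;>
  rcases icc_disj_s11 h2 h4 e24 with d24 | d24 <;>
  rcases icc_disj_s11 hu hv euv with duv | duv <;>
  linarith

lemma small_interval {V : Type*} [Fintype V] {G : SimpleGraph V} (hG : Prereduced G) :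
    ∀ X : Set V, X.ncard ≤ 10 → IsIntervalGraph (G.induce X) := by
  suffices h : ∀ n, ∀ X : Set V, X.ncard = n → X.ncard ≤ 10 → IsIntervalGraph (G.induce X) by
    intro X hX; exact h X.ncard X rfl hX
  intro n
  induction n using Nat.strong_induction_on with
  | _ n ih =>
    intro X hXn hX10
    by_contra hni
    by_cases hmin : ∀ Y : Set V, Y ⊂ X → IsIntervalGraph (G.induce Y)
    · exact hG X hX10 ⟨hni, hmin⟩
    · push_neg at hmin
      obtain ⟨Y, hYX, hYni⟩ := hmin
      have hlt : Y.ncard < n := hXn ▸ Set.ncard_lt_ncard hYX X.toFinite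
      exact hYni (ih Y.ncard hlt Y rfl (by omega))

lemma zmod_ne_zero {m k : ℕ} (hk : k ≠ 0) (hkm : k < m) : ((k : ℕ) : ZMod m) ≠ 0 := by
  haveI : NeZero m := ⟨by omega⟩
  intro h
  rw [ZMod.natCast_eq_zero_iff] at h
  exact absurd (Nat.le_of_dvd (by omega) h) (by omega)

lemma cycle_not_interval {V : Type*} (G : SimpleGraph V) {m : ℕ} (hm : 4 ≤ m)
    (f : ZMod m → V) (hinj : Function.Injective f)
    (hadj : ∀ i j : ZMod m, G.Adj (f i) (f j) ↔ (j = i + 1 ∨ i = j + 1))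
    (h : IsIntervalGraph (G.induce (Set.range f))) : False := by
  haveI : NeZero m := ⟨by omega⟩
  obtain ⟨F, hF1, hF2⟩ := h
  choose A B hAB hEq using hF1
  set g : ZMod m → (Set.range f) := fun i => ⟨f i, Set.mem_range_self i⟩ with hg
  obtain ⟨i, -, hi⟩ := Finset.exists_min_image Finset.univ (fun j => B (g j)) ⟨0, Finset.mem_univ 0⟩
  have h1 : ((1:ℕ) : ZMod m) ≠ 0 := zmod_ne_zero one_ne_zero (by omega)
  have h2 : ((2:ℕ) : ZMod m) ≠ 0 := zmod_ne_zero two_ne_zero (by omega)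
  have h3 : ((3:ℕ) : ZMod m) ≠ 0 := zmod_ne_zero three_ne_zero (by omega)
  push_cast at h1 h2 h3
  have hne : ∀ i j : ZMod m, i ≠ j → g i ≠ g j := by
    intro i j hij h; exact hij (hinj (congrArg Subtype.val h))
  have a1 : (G.induce (Set.range f)).Adj (g i) (g (i+1)) := by
    simp only [SimpleGraph.comap_adj, Function.Embedding.coe_subtype, hg]
    exact (hadj i (i+1)).2 (Or.inl rfl)
  have a2 : (G.induce (Set.range f)).Adj (g i) (g (i-1)) := by
    simp only [SimpleGraph.comap_adj, Function.Embedding.coe_subtype, hg]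
    exact (hadj i (i-1)).2 (Or.inr (by ring))
  have na : ¬ (G.induce (Set.range f)).Adj (g (i-1)) (g (i+1)) := by
    simp only [SimpleGraph.comap_adj, Function.Embedding.coe_subtype, hg]
    rw [hadj]
    rintro (h | h)
    · exact h1 (by linear_combination h)
    · exact h3 (by linear_combination -h)
  have ne1 : g i ≠ g (i+1) := hne _ _ (by intro h; exact h1 (by linear_combination -h))
  have ne2 : g i ≠ g (i-1) := hne _ _ (by intro h; exact h1 (by linear_combination h))
  have ne3 : g (i-1) ≠ g (i+1) := hne _ _ (by intro h; exact h2 (by linear_combination -h))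
  obtain ⟨x, hx1, hx2⟩ := (hF2 _ _ ne1).1 a1
  obtain ⟨y, hy1, hy2⟩ := (hF2 _ _ ne2).1 a2
  rw [hEq] at hx1 hx2 hy1 hy2
  apply na
  rw [hF2 _ _ ne3]
  refine ⟨B (g i), ?_, ?_⟩ <;> rw [hEq] <;> rw [Set.mem_Icc] at *
  · exact ⟨by linarith [hy2.1, hy2.2, hAB (g i), hi (i-1) (Finset.mem_univ _)],
      hi (i-1) (Finset.mem_univ _)⟩
  · exact ⟨by linarith [hx2.1, hx2.2, hAB (g i), hi (i+1) (Finset.mem_univ _)],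
      hi (i+1) (Finset.mem_univ _)⟩

/-- In a prereduced graph, a common neighbor of a hole `H` is adjacent to
every vertex of `N[H]` other than itself. -/
theorem stmt_11 {V : Type*} [Fintype V] (G : SimpleGraph V) (hG : Prereduced G)
    (H : Set V) (hH : IsHole G H)
    (v : V) (hv : v ∈ commonNbrs G H) :
    ∀ u ∈ closedNbhdSet G H, u ≠ v → G.Adj v u := by
  obtain ⟨m, hm4, f, hinj, hrange, hadj⟩ := hH
  have hm11 : 11 ≤ m := by
    by_contra hlt
    push_neg at hlt
    haveI : NeZero m := ⟨by omega⟩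
    have hcard : H.ncard ≤ 10 := by
      rw [← hrange, ← Set.image_univ, Set.ncard_image_of_injective _ hinj, Set.ncard_univ,
        Nat.card_eq_fintype_card, ZMod.card]
      omega
    exact cycle_not_interval G hm4 f hinj hadj (hrange ▸ small_interval hG H hcard)
  haveI : NeZero m := ⟨by omega⟩
  have z1 : ((1:ℕ) : ZMod m) ≠ 0 := zmod_ne_zero (by omega) (by omega)
  have z2 : ((2:ℕ) : ZMod m) ≠ 0 := zmod_ne_zero (by omega) (by omega)
  have z3 : ((3:ℕ) : ZMod m) ≠ 0 := zmod_ne_zero (by omega) (by omega)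
  have z4 : ((4:ℕ) : ZMod m) ≠ 0 := zmod_ne_zero (by omega) (by omega)
  have z5 : ((5:ℕ) : ZMod m) ≠ 0 := zmod_ne_zero (by omega) (by omega)
  push_cast at z1 z2 z3 z4 z5
  intro u hu hune
  have hvH : v ∉ H := fun h => G.loopless.irrefl v (hv v h)
  by_cases huH : u ∈ H
  · exact hv u huH
  rw [closedNbhdSet, Set.mem_iUnion₂] at hu
  obtain ⟨w, hwH, hu'⟩ := hu
  rcases hu' with rfl | huw
  · exact absurd hwH huH
  have huw' : G.Adj w u := huw
  obtain ⟨i, rfl⟩ : ∃ i, f i = w := by rw [← hrange] at hwH; exact hwH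
  by_contra hnadj
  -- the 7-vertex forbidden configuration
  set X : Set V := {u, v, f (i-2), f (i-1), f i, f (i+1), f (i+2)} with hXdef
  have hX10 : X.ncard ≤ 10 := by
    rw [hXdef]
    refine (Set.ncard_insert_le _ _).trans (Nat.succ_le_succ ?_)
    refine (Set.ncard_insert_le _ _).trans (Nat.succ_le_succ ?_)
    refine (Set.ncard_insert_le _ _).trans (Nat.succ_le_succ ?_)
    refine (Set.ncard_insert_le _ _).trans (Nat.succ_le_succ ?_)
    refine (Set.ncard_insert_le _ _).trans (Nat.succ_le_succ ?_)
    refine (Set.ncard_insert_le _ _).trans (Nat.succ_le_succ ?_)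
    simp [Set.ncard_singleton]
  obtain ⟨F, hF1, hF2⟩ := small_interval hG X hX10
  choose A B hAB hEq using hF1
  have hfmem : ∀ j : ZMod m, f j ∈ H := by intro j; rw [← hrange]; exact Set.mem_range_self j
  have hvf : ∀ j : ZMod m, G.Adj v (f j) := fun j => hv (f j) (hfmem j)
  have hfne : ∀ j k : ZMod m, j ≠ k → f j ≠ f k := fun j k hjk h => hjk (hinj h)
  -- subtype elements
  have m0 : f (i-2) ∈ X := by simp [hXdef]
  have m1 : f (i-1) ∈ X := by simp [hXdef]
  have m2 : f i ∈ X := by simp [hXdef]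
  have m3 : f (i+1) ∈ X := by simp [hXdef]
  have m4 : f (i+2) ∈ X := by simp [hXdef]
  have mu : u ∈ X := by simp [hXdef]
  have mv : v ∈ X := by simp [hXdef]
  set q0 : X := ⟨f (i-2), m0⟩
  set q1 : X := ⟨f (i-1), m1⟩
  set q2 : X := ⟨f i, m2⟩
  set q3 : X := ⟨f (i+1), m3⟩
  set q4 : X := ⟨f (i+2), m4⟩
  set qu : X := ⟨u, mu⟩
  set qv : X := ⟨v, mv⟩
  -- inequalities between subtype elements
  have sne : ∀ (x y : V) (hx : x ∈ X) (hy : y ∈ X), x ≠ y →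
      (⟨x, hx⟩ : X) ≠ ⟨y, hy⟩ := fun x y hx hy h hc => h (congrArg Subtype.val hc)
  have nuv : qu ≠ qv := sne _ _ _ _ hune
  have nufj : ∀ j (hj : f j ∈ X), qu ≠ ⟨f j, hj⟩ :=
    fun j hj => sne _ _ _ _ (fun h => huH (h ▸ hfmem j))
  have nvfj : ∀ j (hj : f j ∈ X), qv ≠ ⟨f j, hj⟩ :=
    fun j hj => sne _ _ _ _ (fun h => hvH (h ▸ hfmem j))
  -- adjacency transfer
  have adjX : ∀ (x y : V) (hx : x ∈ X) (hy : y ∈ X),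
      (G.induce X).Adj ⟨x, hx⟩ ⟨y, hy⟩ ↔ G.Adj x y := by
    intro x y hx hy
    simp only [SimpleGraph.comap_adj, Function.Embedding.coe_subtype]
  -- nonempty intersections
  have getN : ∀ (x y : X), x ≠ y → G.Adj x.1 y.1 → (F x ∩ F y).Nonempty := by
    intro x y hne hadj'
    exact (hF2 x y hne).1 ((adjX x.1 y.1 x.2 y.2).2 hadj')
  have getE : ∀ (x y : X), x ≠ y → ¬ G.Adj x.1 y.1 → F x ∩ F y = ∅ := by
    intro x y hne hnadj'
    rw [Set.not_nonempty_iff_eq_empty.symm]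
    intro hn
    exact hnadj' ((adjX x.1 y.1 x.2 y.2).1 ((hF2 x y hne).2 hn))
  -- index inequality helpers
  have consec : ∀ j : ZMod m, G.Adj (f j) (f (j+1)) := fun j => (hadj _ _).2 (Or.inl rfl)
  have n01 := getN q0 q1 (sne _ _ _ _ (hfne _ _ (fun h => z1 (by linear_combination -h))))
    (by have := consec (i-2); convert this using 2 <;> ring)
  have n12 := getN q1 q2 (sne _ _ _ _ (hfne _ _ (fun h => z1 (by linear_combination -h))))
    (by have := consec (i-1); convert this using 2 <;> ring)
  have n23 := getN q2 q3 (sne _ _ _ _ (hfne _ _ (fun h => z1 (by linear_combination -h))))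
    (consec i)
  have n34 := getN q3 q4 (sne _ _ _ _ (hfne _ _ (fun h => z1 (by linear_combination -h))))
    (by have := consec (i+1); convert this using 2 <;> ring)
  have nv0 := getN qv q0 (nvfj _ _) (hvf _)
  have nv4 := getN qv q4 (nvfj _ _) (hvf _)
  have nu2 := getN qu q2 (nufj _ _) huw'.symm
  have nonadjf : ∀ j k : ZMod m, j ≠ k → ¬(k = j + 1) → ¬(j = k + 1) → ¬ G.Adj (f j) (f k) := by
    intro j k _ h1' h2' h
    rcases (hadj j k).1 h with h' | h'
    · exact h1' h'
    · exact h2' h'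
  have e02 := getE q0 q2 (sne _ _ _ _ (hfne _ _ (fun h => z2 (by linear_combination -h))))
    (nonadjf _ _ (fun h => z2 (by linear_combination -h))
      (fun h => z1 (by linear_combination h)) (fun h => z3 (by linear_combination -h)))
  have e03 := getE q0 q3 (sne _ _ _ _ (hfne _ _ (fun h => z3 (by linear_combination -h))))
    (nonadjf _ _ (fun h => z3 (by linear_combination -h))
      (fun h => z2 (by linear_combination h)) (fun h => z4 (by linear_combination -h)))
  have e04 := getE q0 q4 (sne _ _ _ _ (hfne _ _ (fun h => z4 (by linear_combination -h))))
    (nonadjf _ _ (fun h => z4 (by linear_combination -h))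
      (fun h => z3 (by linear_combination h)) (fun h => z5 (by linear_combination -h)))
  have e14 := getE q1 q4 (sne _ _ _ _ (hfne _ _ (fun h => z3 (by linear_combination -h))))
    (nonadjf _ _ (fun h => z3 (by linear_combination -h))
      (fun h => z2 (by linear_combination h)) (fun h => z4 (by linear_combination -h)))
  have e24 := getE q2 q4 (sne _ _ _ _ (hfne _ _ (fun h => z2 (by linear_combination -h))))
    (nonadjf _ _ (fun h => z2 (by linear_combination -h))
      (fun h => z1 (by linear_combination h)) (fun h => z3 (by linear_combination -h)))
  have euv := getE qu qv nuv (fun h => hnadj h.symm)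
  rw [hEq q0, hEq q1] at n01
  rw [hEq q1, hEq q2] at n12
  rw [hEq q2, hEq q3] at n23
  rw [hEq q3, hEq q4] at n34
  rw [hEq qv, hEq q0] at nv0
  rw [hEq qv, hEq q4] at nv4
  rw [hEq qu, hEq q2] at nu2
  rw [hEq q0, hEq q2] at e02
  rw [hEq q0, hEq q3] at e03
  rw [hEq q0, hEq q4] at e04
  rw [hEq q1, hEq q4] at e14
  rw [hEq q2, hEq q4] at e24
  rw [hEq qu, hEq qv] at euv
  exact key_contra (A q0) (B q0) (A q1) (B q1) (A q2) (B q2) (A q3) (B q3) (A q4) (B q4)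
    (A qu) (B qu) (A qv) (B qv) (hAB q0) (hAB q1) (hAB q2) (hAB q3) (hAB q4) (hAB qu) (hAB qv)
    n01 n12 n23 n34 nv0 nv4 nu2 e02 e03 e04 e14 e24 euv
end
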